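/- Let c ≥ 1 and let G be a finite connected multigraph (parallel edges and loops allowed) that is c-sparse and in which every node has degree at least 2. Then G is a (2c, 3c)-skeleton: G consists of at most 2c distinguished nodes connected by at most 3c simple paths that are pairwise disjoint except possibly at their endpoints, every node of G lying on one of these paths. -/

import Mathlib

namespace GDB

/-! ## Signed roles (two-way edge labels) -/

/-- A signed role: an edge label traversed forwards or backwards. -/
inductive SRole (E : Type) : Type
  | fwd (r : E)
  | bwd (r : E)

/-- The underlying edge label of a signed role. -/
def SRole.base {E : Type} : SRole E → E
  | .fwd r => r
  | .bwd r => r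

/-- The inverse of a signed role. -/
def SRole.inv {E : Type} : SRole E → SRole E
  | .fwd r => .bwd r
  | .bwd r => .fwd r

/-! ## Graphs -/

/-- A graph over node labels `N` and edge labels `E`; nodes are drawn from
the countably infinite set of node identifiers `ℕ`. -/
structure Graph (N E : Type) : Type where
  dom : Set ℕ
  nodeLab : N → Set ℕ
  edgeRel : E → Set (ℕ × ℕ)
  nodeLab_sub : ∀ A, nodeLab A ⊆ dom
  edgeRel_dom : ∀ r u v, (u, v) ∈ edgeRel r → u ∈ dom ∧ v ∈ dom

namespace Graph

variable {N E : Type}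

/-- Interpretation of a signed role. -/
def srel (G : Graph N E) : SRole E → Set (ℕ × ℕ)
  | .fwd r => G.edgeRel r
  | .bwd r => {p | (p.2, p.1) ∈ G.edgeRel r}

/-- A graph is finite if its domain is finite and all but finitely many labels
have empty interpretation. -/
def Finite (G : Graph N E) : Prop :=
  G.dom.Finite ∧ {A | G.nodeLab A ≠ ∅}.Finite ∧ {r | G.edgeRel r ≠ ∅}.Finite

/-- The `R`-successors of node `u` that carry label `B`. -/
def succ (G : Graph N E) (R : SRole E) (B : N) (u : ℕ) : Set ℕ :=
  {v | (u, v) ∈ G.srel R ∧ v ∈ G.nodeLab B}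

/-- A graph is over node labels `Γ₀` and edge labels `σ₀` if it uses no label
outside of these sets. -/
def Over (G : Graph N E) (Γ₀ : Set N) (σ₀ : Set E) : Prop :=
  (∀ A, A ∉ Γ₀ → G.nodeLab A = ∅) ∧ (∀ r, r ∉ σ₀ → G.edgeRel r = ∅)

/-- The set of (labelled) edges of a graph, as triples. -/
def edgeTriples (G : Graph N E) : Set (E × ℕ × ℕ) :=
  {t | (t.2.1, t.2.2) ∈ G.edgeRel t.1}

/-- Undirected adjacency. -/
def Adj (G : Graph N E) (u v : ℕ) : Prop :=
  ∃ r, (u, v) ∈ G.edgeRel r ∨ (v, u) ∈ G.edgeRel r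

/-- The graph is connected (as an undirected multigraph). -/
def ConnectedG (G : Graph N E) : Prop :=
  ∀ u ∈ G.dom, ∀ v ∈ G.dom, Relation.ReflTransGen G.Adj u v

/-- The graph is acyclic (as an undirected multigraph): there is no closed walk
using pairwise distinct edges. -/
def AcyclicG (G : Graph N E) : Prop :=
  ¬ ∃ (k : ℕ) (es : Fin (k + 1) → E × ℕ × ℕ) (vs : Fin (k + 2) → ℕ),
      Function.Injective es ∧ vs 0 = vs (Fin.last (k + 1)) ∧
      ∀ i : Fin (k + 1), es i ∈ G.edgeTriples ∧
        ((es i).2 = (vs i.castSucc, vs i.succ) ∨ (es i).2 = (vs i.succ, vs i.castSucc))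

/-- The degree of a node: the number of incident edges, a loop contributing 2. -/
noncomputable def degree (G : Graph N E) (u : ℕ) : ℕ :=
  {p : (E × ℕ × ℕ) × Bool |
      p.1 ∈ G.edgeTriples ∧ (if p.2 then p.1.2.1 = u else p.1.2.2 = u)}.ncard

/-- The node `u` has finitely many incident edges. -/
def FinBranching (G : Graph N E) (u : ℕ) : Prop :=
  {t | t ∈ G.edgeTriples ∧ (t.2.1 = u ∨ t.2.2 = u)}.Finite

/-- The subgraph of `G` induced by the set `X` of nodes. -/
def induce (G : Graph N E) (X : Set ℕ) : Graph N E where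
  dom := G.dom ∩ X
  nodeLab A := G.nodeLab A ∩ X
  edgeRel r := {p | p ∈ G.edgeRel r ∧ p.1 ∈ X ∧ p.2 ∈ X}
  nodeLab_sub := by
    intro A u hu
    exact ⟨G.nodeLab_sub A hu.1, hu.2⟩
  edgeRel_dom := by
    intro r u v h
    exact ⟨⟨(G.edgeRel_dom r u v h.1).1, h.2.1⟩, ⟨(G.edgeRel_dom r u v h.1).2, h.2.2⟩⟩

/-- Expand a graph with an additional assignment of sets of nodes to node labels. -/
def expand (G : Graph N E) (ext : N → Set ℕ) : Graph N E where
  dom := G.dom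
  nodeLab A := G.nodeLab A ∪ (ext A ∩ G.dom)
  edgeRel := G.edgeRel
  nodeLab_sub := by
    intro A u hu
    rcases hu with h | h
    · exact G.nodeLab_sub A h
    · exact h.2
  edgeRel_dom := G.edgeRel_dom

end Graph

/-! ## Schemas with participation constraints -/

/-- Participation constraint symbols: `?`, `1`, `+`, `*`, `0`. -/
inductive Card : Type
  | opt   -- ?
  | one   -- 1
  | plus  -- +
  | star  -- *
  | zero  -- 0

/-- The set of cardinalities allowed by each participation constraint symbol. -/
def Card.allowed : Card → Set ℕ
  | .opt => {0, 1}
  | .one => {1}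
  | .plus => {n | 1 ≤ n}
  | .star => Set.univ
  | .zero => {0}

/-- A set of successors satisfies a participation constraint. -/
def Card.ok (c : Card) (s : Set ℕ) : Prop :=
  c = Card.star ∨ (s.Finite ∧ s.ncard ∈ c.allowed)

/-- The preorder on participation constraints: containment of allowed cardinalities. -/
def Card.le (c d : Card) : Prop := c.allowed ⊆ d.allowed

/-- A schema: finite sets of allowed node and edge labels and participation
constraints. -/
structure Schema (N E : Type) : Type where
  nlab : Finset N
  elabs : Finset E
  delta : N → SRole E → N → Card

/-- A schema is over `Γ₀` and `σ₀`: its label sets are `Γ₀` and `σ₀` (and its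
participation-constraint function is trivial outside of its intended domain
`Γ₀ × σ₀± × Γ₀`, encoding a function with that restricted domain). -/
def Schema.Over {N E : Type} (S : Schema N E) (Γ₀ : Set N) (σ₀ : Set E) : Prop :=
  (↑S.nlab : Set N) = Γ₀ ∧ (↑S.elabs : Set E) = σ₀ ∧
  ∀ (A : N) (R : SRole E) (B : N),
    ¬(A ∈ Γ₀ ∧ SRole.base R ∈ σ₀ ∧ B ∈ Γ₀) → S.delta A R B = Card.star

/-- A graph conforms to a schema: every node has exactly one label, which is
an allowed node label, every edge label is allowed, and all participation
constraints hold. -/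
def Conforms {N E : Type} (G : Graph N E) (S : Schema N E) : Prop :=
  (∀ u ∈ G.dom, ∃! A, u ∈ G.nodeLab A) ∧
  (∀ A, (G.nodeLab A).Nonempty → A ∈ S.nlab) ∧
  (∀ r, (G.edgeRel r).Nonempty → r ∈ S.elabs) ∧
  (∀ A ∈ S.nlab, ∀ B ∈ S.nlab, ∀ R : SRole E, SRole.base R ∈ S.elabs →
    ∀ u ∈ G.nodeLab A, Card.ok (S.delta A R B) (G.succ R B u))

/-- The set of finite graphs conforming to a schema. -/
def L {N E : Type} (S : Schema N E) : Set (Graph N E) :=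
  {G | Graph.Finite G ∧ Conforms G S}

/-! ## ALCIF concepts and TBoxes -/

/-- ALCIF concepts. -/
inductive Concept (N E : Type) : Type
  | bot
  | atom (A : N)
  | inter (C D : Concept N E)
  | neg (C : Concept N E)
  | ex (R : SRole E) (C : Concept N E)
  | le1 (R : SRole E) (C : Concept N E)

/-- Interpretation of ALCIF concepts in a graph. -/
def Concept.interp {N E : Type} (G : Graph N E) : Concept N E → Set ℕ
  | .bot => ∅
  | .atom A => G.nodeLab A
  | .inter C D => Concept.interp G C ∩ Concept.interp G D
  | .neg C => G.dom \ Concept.interp G C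
  | .ex R C => {u | u ∈ G.dom ∧ ∃ v, (u, v) ∈ G.srel R ∧ v ∈ Concept.interp G C}
  | .le1 R C => {u | u ∈ G.dom ∧ {v | (u, v) ∈ G.srel R ∧ v ∈ Concept.interp G C}.Subsingleton}

/-- A concept inclusion. -/
abbrev CI (N E : Type) := Concept N E × Concept N E

/-- A graph satisfies a concept inclusion. -/
def SatCI {N E : Type} (G : Graph N E) (ci : CI N E) : Prop :=
  Concept.interp G ci.1 ⊆ Concept.interp G ci.2

/-- A graph is a model of a TBox. -/
def Models {N E : Type} (G : Graph N E) (T : Set (CI N E)) : Prop :=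
  ∀ ci ∈ T, SatCI G ci

/-- The TBox `T_S` corresponding to a schema `S`. -/
def schemaTBox {N E : Type} (S : Schema N E) : Set (CI N E) :=
  {ci | ∃ A ∈ S.nlab, ∃ B ∈ S.nlab, ∃ R : SRole E, SRole.base R ∈ S.elabs ∧
    (((S.delta A R B = Card.one ∨ S.delta A R B = Card.plus) ∧
        ci = (Concept.atom A, Concept.ex R (Concept.atom B))) ∨
     ((S.delta A R B = Card.one ∨ S.delta A R B = Card.opt ∨ S.delta A R B = Card.zero) ∧
        ci = (Concept.atom A, Concept.le1 R (Concept.atom B))) ∨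
     (S.delta A R B = Card.zero ∧
        ci = (Concept.atom A, Concept.neg (Concept.ex R (Concept.atom B)))))}

/-- `T̂_S`: the schema TBox together with disjointness of distinct node labels. -/
def hatTBox {N E : Type} (S : Schema N E) : Set (CI N E) :=
  schemaTBox S ∪ {ci | ∃ A ∈ S.nlab, ∃ B ∈ S.nlab, A ≠ B ∧
    ci = (Concept.inter (Concept.atom A) (Concept.atom B), Concept.bot)}

/-! ## L0 statements -/

/-- L0 statements: `A ⊑ ∃R.B`, `A ⊑ ∄R.B`, `A ⊑ ∃≤1 R.B`. -/
inductive L0Stmt (N E : Type) : Type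
  | exis (A : N) (R : SRole E) (B : N)
  | nex (A : N) (R : SRole E) (B : N)
  | le1 (A : N) (R : SRole E) (B : N)

/-- Satisfaction of an L0 statement in a graph. -/
def L0Sat {N E : Type} (G : Graph N E) : L0Stmt N E → Prop
  | .exis A R B => ∀ u ∈ G.nodeLab A, ∃ v, (u, v) ∈ G.srel R ∧ v ∈ G.nodeLab B
  | .nex A R B => ∀ u ∈ G.nodeLab A, ¬ ∃ v, (u, v) ∈ G.srel R ∧ v ∈ G.nodeLab B
  | .le1 A R B => ∀ u ∈ G.nodeLab A, (G.succ R B u).Subsingleton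

/-- An L0 statement is over node labels `Γ₀` and edge labels `σ₀`. -/
def L0Stmt.Over {N E : Type} (st : L0Stmt N E) (Γ₀ : Set N) (σ₀ : Set E) : Prop :=
  match st with
  | .exis A R B => A ∈ Γ₀ ∧ SRole.base R ∈ σ₀ ∧ B ∈ Γ₀
  | .nex A R B => A ∈ Γ₀ ∧ SRole.base R ∈ σ₀ ∧ B ∈ Γ₀
  | .le1 A R B => A ∈ Γ₀ ∧ SRole.base R ∈ σ₀ ∧ B ∈ Γ₀

/-- Coherence of an L0 TBox. -/
def Coherent {N E : Type} (T : Set (L0Stmt N E)) : Prop :=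
  (∀ (A : N) (R : SRole E) (B : N),
      ¬(L0Stmt.exis A R B ∈ T ∧ L0Stmt.nex A R B ∈ T)) ∧
  (∀ (A : N) (R : SRole E) (B : N), L0Stmt.nex A R B ∈ T → L0Stmt.le1 A R B ∈ T)

/-- The L0 TBox corresponding to a schema. -/
def schemaL0 {N E : Type} (S : Schema N E) : Set (L0Stmt N E) :=
  {st | ∃ A ∈ S.nlab, ∃ B ∈ S.nlab, ∃ R : SRole E, SRole.base R ∈ S.elabs ∧
    (((S.delta A R B = Card.one ∨ S.delta A R B = Card.plus) ∧ st = L0Stmt.exis A R B) ∨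
     ((S.delta A R B = Card.one ∨ S.delta A R B = Card.opt ∨ S.delta A R B = Card.zero) ∧
        st = L0Stmt.le1 A R B) ∨
     (S.delta A R B = Card.zero ∧ st = L0Stmt.nex A R B))}

/-! ## Two-way regular path expressions and C2RPQs -/

/-- Two-way regular path expressions. -/
inductive RE (N E : Type) : Type
  | empty
  | eps
  | atom (A : N)
  | role (R : SRole E)
  | comp (e f : RE N E)
  | plus (e f : RE N E)
  | star (e : RE N E)

/-- Semantics of a two-way regular path expression: the binary relation of
pairs of nodes connected by a witnessing path. -/
def RE.sem {N E : Type} (G : Graph N E) : RE N E → Set (ℕ × ℕ)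
  | .empty => ∅
  | .eps => {p | p.1 = p.2 ∧ p.1 ∈ G.dom}
  | .atom A => {p | p.1 = p.2 ∧ p.1 ∈ G.nodeLab A}
  | .role R => G.srel R
  | .comp e f => {p | ∃ w, (p.1, w) ∈ RE.sem G e ∧ (w, p.2) ∈ RE.sem G f}
  | .plus e f => RE.sem G e ∪ RE.sem G f
  | .star e => {p | p.1 ∈ G.dom ∧ Relation.ReflTransGen (fun a b => (a, b) ∈ RE.sem G e) p.1 p.2}

/-- The node labels occurring in a two-way regular path expression. -/
def RE.nlabels {N E : Type} : RE N E → Set N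
  | .atom A => {A}
  | .comp e f => RE.nlabels e ∪ RE.nlabels f
  | .plus e f => RE.nlabels e ∪ RE.nlabels f
  | .star e => RE.nlabels e
  | _ => ∅

/-- A C2RPQ with free variables `V`: a finite conjunction of atoms `φ(z, z')`
whose variables are either free (`V`) or among `n` existentially quantified
variables. A Boolean C2RPQ is one with `V = Empty`. -/
structure C2RPQ (N E : Type) (V : Type) : Type where
  n : ℕ
  atoms : List (RE N E × ((V ⊕ Fin n) × (V ⊕ Fin n)))

/-- The answers of a C2RPQ in a graph: assignments of nodes to the free
variables that can be extended to the existential variables so that all atoms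
are satisfied. -/
def C2RPQ.answers {N E V : Type} (q : C2RPQ N E V) (G : Graph N E) : Set (V → ℕ) :=
  {t | (∀ v, t v ∈ G.dom) ∧ ∃ s : Fin q.n → ℕ, (∀ i, s i ∈ G.dom) ∧
    ∀ a ∈ q.atoms, (Sum.elim t s a.2.1, Sum.elim t s a.2.2) ∈ RE.sem G a.1}

/-- Answers of a union of C2RPQs. -/
def UAnswers {N E V : Type} (Q : List (C2RPQ N E V)) (G : Graph N E) : Set (V → ℕ) :=
  {t | ∃ q ∈ Q, t ∈ q.answers G}

/-- A trivial atom: `∅(x,x)`, `ε(x,x)` or `A(x,x)`. -/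
def TrivialAtom {N E α : Type} (a : RE N E × α × α) : Prop :=
  a.2.1 = a.2.2 ∧ (a.1 = RE.empty ∨ a.1 = RE.eps ∨ ∃ A, a.1 = RE.atom A)

/-- Acyclicity of a C2RPQ: the multigraph on its variables with one edge per
non-trivial atom has no path of pairwise distinct edges visiting a node twice. -/
def C2RPQ.Acyclic {N E V : Type} (q : C2RPQ N E V) : Prop :=
  ¬ ∃ (k : ℕ) (es : Fin (k + 1) → Fin q.atoms.length) (vs : Fin (k + 2) → V ⊕ Fin q.n),
      Function.Injective es ∧ (∃ i j : Fin (k + 2), i ≠ j ∧ vs i = vs j) ∧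
      ∀ i : Fin (k + 1), ¬ TrivialAtom (q.atoms.get (es i)) ∧
        ((q.atoms.get (es i)).2 = (vs i.castSucc, vs i.succ) ∨
         (q.atoms.get (es i)).2 = (vs i.succ, vs i.castSucc))

/-- Adjacency of variables in the multigraph of a C2RPQ. -/
def C2RPQ.VarAdj {N E V : Type} (q : C2RPQ N E V) (x y : V ⊕ Fin q.n) : Prop :=
  ∃ a ∈ q.atoms, (a.2 = (x, y) ∨ a.2 = (y, x))

/-- Connectedness of the multigraph of a C2RPQ. -/
def C2RPQ.Connected {N E V : Type} (q : C2RPQ N E V) : Prop :=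
  ∀ x y : V ⊕ Fin q.n, Relation.ReflTransGen q.VarAdj x y

/-- A unary 2RPQ: a single-atom query of the form `∃y. φ(x,y)` or `∃y. φ(y,x)`. -/
def IsUnary2RPQ {N E : Type} (q : C2RPQ N E (Fin 1)) : Prop :=
  ∃ φ : RE N E,
    q = ⟨1, [(φ, (Sum.inl (0 : Fin 1), Sum.inr (0 : Fin 1)))]⟩ ∨
    q = ⟨1, [(φ, (Sum.inr (0 : Fin 1), Sum.inl (0 : Fin 1)))]⟩

/-- A Boolean 2RPQ: a Boolean query with a single atom. -/
def IsBoolean2RPQ {N E : Type} (q : C2RPQ N E Empty) : Prop :=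
  ∃ (φ : RE N E) (z z' : Empty ⊕ Fin q.n), q.atoms = [(φ, (z, z'))]

/-! ## The query rewriting `P̂` -/

/-- The disjunction `A₁ + ⋯ + A_n` of all node labels of a schema. -/
noncomputable def labelUnion {N E : Type} (S : Schema N E) : RE N E :=
  S.nlab.toList.foldr (fun A e => RE.plus (RE.atom A) e) RE.empty

/-- The rewriting of a two-way regular expression: insert the disjunction of
all node labels of `S` before and after every edge label, and replace labels
not in `Γ_S ∪ Σ_S±` by `∅`. -/
noncomputable def RE.hat {N E : Type} [DecidableEq N] [DecidableEq E] (S : Schema N E) : RE N E → RE N E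
  | .empty => .empty
  | .eps => .eps
  | .atom A => if A ∈ S.nlab then .atom A else .empty
  | .role R => if SRole.base R ∈ S.elabs then
      .comp (labelUnion S) (.comp (.role R) (labelUnion S)) else .empty
  | .comp e f => .comp (RE.hat S e) (RE.hat S f)
  | .plus e f => .plus (RE.hat S e) (RE.hat S f)
  | .star e => .star (RE.hat S e)

/-- The rewriting `q̂` of a C2RPQ. -/
noncomputable def C2RPQ.hat {N E V : Type} [DecidableEq N] [DecidableEq E] (S : Schema N E)
    (q : C2RPQ N E V) : C2RPQ N E V :=
  { n := q.n, atoms := q.atoms.map (fun a => (RE.hat S a.1, a.2)) }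

/-! ## Graph transformations -/

/-- A family of node constructors: for every node label `A`, an injective
function `f_A : ℕ^{k_A} → ℕ`, the ranges being pairwise disjoint. -/
structure Constructors (N : Type) : Type where
  arity : N → ℕ
  f : (A : N) → (Fin (arity A) → ℕ) → ℕ
  inj : ∀ A, Function.Injective (f A)
  disj : ∀ A B, A ≠ B → ∀ s t, f A s ≠ f B t

/-- A node rule `A(f_A(x̄)) ← q(x̄)` with acyclic body. -/
structure NodeRule (N E : Type) (F : Constructors N) : Type where
  head : N
  body : C2RPQ N E (Fin (F.arity head))
  acyc : body.Acyclic

/-- An edge rule `r(f_A(x̄), f_B(ȳ)) ← q(x̄, ȳ)` with acyclic body. -/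
structure EdgeRule (N E : Type) (F : Constructors N) : Type where
  lab : E
  src : N
  tgt : N
  body : C2RPQ N E (Fin (F.arity src) ⊕ Fin (F.arity tgt))
  acyc : body.Acyclic

/-- A graph transformation: a finite set of node and edge rules. -/
structure Transformation (N E : Type) (F : Constructors N) : Type where
  nodeRules : List (NodeRule N E F)
  edgeRules : List (EdgeRule N E F)

variable {N E : Type}

/-- The result of applying a transformation to a graph. -/
def Transformation.apply {F : Constructors N} (T : Transformation N E F)
    (G : Graph N E) : Graph N E where
  dom := {u | (∃ ρ ∈ T.nodeRules, ∃ t ∈ ρ.body.answers G, u = F.f ρ.head t) ∨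
              (∃ ρ ∈ T.edgeRules, ∃ t ∈ ρ.body.answers G,
                 u = F.f ρ.src (fun i => t (Sum.inl i)) ∨
                 u = F.f ρ.tgt (fun i => t (Sum.inr i)))}
  nodeLab A := {u | ∃ ρ ∈ T.nodeRules, ρ.head = A ∧
                  ∃ t ∈ ρ.body.answers G, u = F.f ρ.head t}
  edgeRel r := {p | ∃ ρ ∈ T.edgeRules, ρ.lab = r ∧
                  ∃ t ∈ ρ.body.answers G,
                    p.1 = F.f ρ.src (fun i => t (Sum.inl i)) ∧
                    p.2 = F.f ρ.tgt (fun i => t (Sum.inr i))}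
  nodeLab_sub := by
    rintro A u ⟨ρ, hρ, _, t, ht, rfl⟩
    exact Or.inl ⟨ρ, hρ, t, ht, rfl⟩
  edgeRel_dom := by
    rintro r u v ⟨ρ, hρ, _, t, ht, h1, h2⟩
    exact ⟨Or.inr ⟨ρ, hρ, t, ht, Or.inl h1⟩, Or.inr ⟨ρ, hρ, t, ht, Or.inr h2⟩⟩

/-- The node labels used in heads of rules of a transformation (`Γ_T`). -/
def Transformation.nlabels {F : Constructors N} (T : Transformation N E F) : Set N :=
  {A | (∃ ρ ∈ T.nodeRules, ρ.head = A) ∨ ∃ ρ ∈ T.edgeRules, ρ.src = A ∨ ρ.tgt = A}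

/-- The edge labels used in heads of rules of a transformation (`Σ_T`). -/
def Transformation.elabels {F : Constructors N} (T : Transformation N E F) : Set E :=
  {r | ∃ ρ ∈ T.edgeRules, ρ.lab = r}

/-- Answers of the union `Q_A^T` of the bodies of `A`-node rules. -/
def QAans {F : Constructors N} (T : Transformation N E F) (A : N) (G : Graph N E) :
    Set ((Fin (F.arity A)) → ℕ) :=
  {t | ∃ ρ ∈ T.nodeRules, ∃ h : ρ.head = A,
        (fun i => t (Fin.cast (congrArg F.arity h) i)) ∈ ρ.body.answers G}

/-- Answers of the union `Q_{A,R,B}^T` of the bodies of matching edge rules. -/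
def QABans {F : Constructors N} (T : Transformation N E F)
    (A : N) (R : SRole E) (B : N) (G : Graph N E) :
    Set ((Fin (F.arity A) → ℕ) × (Fin (F.arity B) → ℕ)) :=
  match R with
  | SRole.fwd r =>
      {ts | ∃ ρ ∈ T.edgeRules, ρ.lab = r ∧
        ∃ (h1 : ρ.src = A) (h2 : ρ.tgt = B),
          Sum.elim (fun i => ts.1 (Fin.cast (congrArg F.arity h1) i))
                   (fun i => ts.2 (Fin.cast (congrArg F.arity h2) i)) ∈ ρ.body.answers G}
  | SRole.bwd r =>
      {ts | ∃ ρ ∈ T.edgeRules, ρ.lab = r ∧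
        ∃ (h1 : ρ.src = B) (h2 : ρ.tgt = A),
          Sum.elim (fun i => ts.2 (Fin.cast (congrArg F.arity h1) i))
                   (fun i => ts.1 (Fin.cast (congrArg F.arity h2) i)) ∈ ρ.body.answers G}

/-- `(T,S) ⊨ ⊤ ⊑ ⊔Γ_T`: every node of every output graph carries some label in `Γ_T`. -/
def TopCovered {F : Constructors N} (T : Transformation N E F) (S : Schema N E) : Prop :=
  ∀ G ∈ L S, ∀ u ∈ (T.apply G).dom, ∃ A ∈ T.nlabels, u ∈ (T.apply G).nodeLab A

/-- A node rule is productive modulo a schema. -/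
def NodeRule.Productive {F : Constructors N} (ρ : NodeRule N E F) (S : Schema N E) : Prop :=
  ∃ G ∈ L S, (ρ.body.answers G).Nonempty

/-- An edge rule is productive modulo a schema. -/
def EdgeRule.Productive {F : Constructors N} (ρ : EdgeRule N E F) (S : Schema N E) : Prop :=
  ∃ G ∈ L S, (ρ.body.answers G).Nonempty

/-- A transformation is trimmed modulo a schema. -/
def Transformation.Trimmed {F : Constructors N} (T : Transformation N E F)
    (S : Schema N E) : Prop :=
  (∀ ρ ∈ T.nodeRules, ρ.Productive S) ∧
  (∀ ρ ∈ T.edgeRules, ρ.Productive S) ∧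
  (∀ A ∈ T.nlabels, ∃ ρ ∈ T.nodeRules, ρ.head = A) ∧
  (∀ r ∈ T.elabels, ∃ ρ ∈ T.edgeRules, ρ.lab = r)

/-- The set of all L0 statements over `Γ_T`, `Σ_T` satisfied by all outputs of `T`
on inputs conforming to `S`. -/
def elicited {F : Constructors N} (T : Transformation N E F) (S : Schema N E) :
    Set (L0Stmt N E) :=
  {st | L0Stmt.Over st T.nlabels T.elabels ∧ ∀ G ∈ L S, L0Sat (T.apply G) st}

/-! ## Horn-ALCIF -/

/-- Horn-ALCIF concept inclusions; `K`, `K'` are (possibly empty) intersections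
of concept names, represented as lists. -/
inductive HornCI (N E : Type) : Type
  | atom (K : List N) (A : N)                      -- K ⊑ A
  | bot (K : List N)                               -- K ⊑ ⊥
  | all (K : List N) (R : SRole E) (K' : List N)   -- K ⊑ ∀R.K'
  | ex (K : List N) (R : SRole E) (K' : List N)    -- K ⊑ ∃R.K'
  | nex (K : List N) (R : SRole E) (K' : List N)   -- K ⊑ ∄R.K'
  | le1 (K : List N) (R : SRole E) (K' : List N)   -- K ⊑ ∃≤1 R.K'

/-- A node satisfies an intersection of concept names. -/
def conjSat {N E : Type} (G : Graph N E) (K : List N) (u : ℕ) : Prop :=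
  u ∈ G.dom ∧ ∀ A ∈ K, u ∈ G.nodeLab A

/-- Satisfaction of a Horn-ALCIF concept inclusion in a graph. -/
def HornCI.Sat {N E : Type} (G : Graph N E) : HornCI N E → Prop
  | .atom K A => ∀ u, conjSat G K u → u ∈ G.nodeLab A
  | .bot K => ∀ u, ¬ conjSat G K u
  | .all K R K' => ∀ u, conjSat G K u → ∀ v, (u, v) ∈ G.srel R → conjSat G K' v
  | .ex K R K' => ∀ u, conjSat G K u → ∃ v, (u, v) ∈ G.srel R ∧ conjSat G K' v
  | .nex K R K' => ∀ u, conjSat G K u → ¬ ∃ v, (u, v) ∈ G.srel R ∧ conjSat G K' v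
  | .le1 K R K' => ∀ u, conjSat G K u →
      {v | (u, v) ∈ G.srel R ∧ conjSat G K' v}.Subsingleton

/-- The concept names appearing in a Horn-ALCIF concept inclusion. -/
def HornCI.nlabels {N E : Type} : HornCI N E → Set N
  | .atom K A => {B | B ∈ K} ∪ {A}
  | .bot K => {B | B ∈ K}
  | .all K _ K' => {B | B ∈ K} ∪ {B | B ∈ K'}
  | .ex K _ K' => {B | B ∈ K} ∪ {B | B ∈ K'}
  | .nex K _ K' => {B | B ∈ K} ∪ {B | B ∈ K'}
  | .le1 K _ K' => {B | B ∈ K} ∪ {B | B ∈ K'}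

/-- The roles appearing in a Horn-ALCIF concept inclusion. -/
def HornCI.roles {N E : Type} : HornCI N E → Set (SRole E)
  | .atom _ _ => ∅
  | .bot _ => ∅
  | .all _ R _ => {R}
  | .ex _ R _ => {R}
  | .nex _ R _ => {R}
  | .le1 _ R _ => {R}

/-- A graph is a model of a Horn-ALCIF TBox. -/
def HornModels {N E : Type} (G : Graph N E) (T : Set (HornCI N E)) : Prop :=
  ∀ ci ∈ T, ci.Sat G

/-- Unrestricted (finite or infinite) entailment modulo a Horn-ALCIF TBox. -/
def HornEntails {N E : Type} (T : Set (HornCI N E)) (ci : HornCI N E) : Prop :=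
  ∀ G : Graph N E, HornModels G T → ci.Sat G

/-- A finmod cycle `K₁, R₁, …, K_n` (with `K_{n} = K₁`) in a TBox. -/
def IsFinmodCycle {N E : Type} (T : Set (HornCI N E)) (n : ℕ)
    (K : Fin (n + 1) → List N) (R : Fin n → SRole E) : Prop :=
  K (Fin.last n) = K 0 ∧
  ∀ i : Fin n,
    HornEntails T (HornCI.ex (K i.castSucc) (R i) (K i.succ)) ∧
    HornEntails T (HornCI.le1 (K i.succ) (R i).inv (K i.castSucc))

/-- A TBox is closed under reversing finmod cycles. -/
def ReversalClosed {N E : Type} (T : Set (HornCI N E)) : Prop :=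
  ∀ (n : ℕ) (K : Fin (n + 1) → List N) (R : Fin n → SRole E),
    IsFinmodCycle T n K R →
    ∀ i : Fin n,
      HornCI.ex (K i.succ) (R i).inv (K i.castSucc) ∈ T ∧
      HornCI.le1 (K i.castSucc) (R i) (K i.succ) ∈ T

/-- The completion `𝒯*`: the least extension of `𝒯` closed under reversing
finmod cycles (obtained by exhaustively reversing finmod cycles). -/
def completion {N E : Type} (T : Set (HornCI N E)) : Set (HornCI N E) :=
  ⋂₀ {T' | T ⊆ T' ∧ ReversalClosed T'}

/-- A triple `(K, R, K')` is satisfiable modulo a TBox. -/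
def TripleSat {N E : Type} (T : Set (HornCI N E)) (K : List N) (R : SRole E)
    (K' : List N) : Prop :=
  ∃ G : Graph N E, HornModels G T ∧
    ∃ u u', conjSat G K u ∧ (u, u') ∈ G.srel R ∧ conjSat G K' u'

/-- A TBox is S-driven. -/
def SDriven {N E : Type} (S : Schema N E) (T : Set (HornCI N E)) : Prop :=
  (∀ K (R : SRole E) K', HornCI.ex K R K' ∈ T → TripleSat T K R K' →
    ∃ A ∈ S.nlab, ∃ A' ∈ S.nlab, A ∈ K ∧ A' ∈ K' ∧ HornCI.ex [A] R [A'] ∈ T) ∧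
  (∀ K (R : SRole E) K', HornCI.le1 K R K' ∈ T → TripleSat T K R K' →
    ∃ A ∈ S.nlab, ∃ A' ∈ S.nlab, A ∈ K ∧ A' ∈ K' ∧ HornCI.le1 [A] R [A'] ∈ T)

/-! ## Sparsity and skeleta -/

/-- Simple paths in a graph (viewed as an undirected multigraph). -/
structure GPath {N E : Type} (G : Graph N E) : Type where
  len : ℕ
  verts : Fin (len + 1) → ℕ
  edges : Fin len → E × ℕ × ℕ
  verts_mem : ∀ i, verts i ∈ G.dom
  edges_mem : ∀ i, edges i ∈ G.edgeTriples
  conn : ∀ i : Fin len,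
    (edges i).2 = (verts i.castSucc, verts i.succ) ∨
    (edges i).2 = (verts i.succ, verts i.castSucc)

/-- A path is simple: edges are pairwise distinct and no node is repeated,
except that the two endpoints may coincide (forming a cycle). -/
def GPath.Simple {N E : Type} {G : Graph N E} (p : GPath G) : Prop :=
  Function.Injective p.edges ∧
  ∀ i j : Fin (p.len + 1), p.verts i = p.verts j →
    i = j ∨ (i = 0 ∧ j = Fin.last p.len) ∨ (j = 0 ∧ i = Fin.last p.len)

/-- `u` is an endpoint of the path. -/
def GPath.IsEndpoint {N E : Type} {G : Graph N E} (p : GPath G) (u : ℕ) : Prop :=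
  p.verts 0 = u ∨ p.verts (Fin.last p.len) = u

/-- The graph is a `(k, l)`-skeleton: at most `k` distinguished nodes connected
by at most `l` simple paths, pairwise disjoint except possibly at endpoints,
covering all nodes and edges of the graph. -/
def IsSkeleton {N E : Type} (G : Graph N E) (k l : ℕ) : Prop :=
  ∃ (D : Set ℕ) (m : ℕ) (P : Fin m → GPath G),
    D ⊆ G.dom ∧ D.Finite ∧ D.ncard ≤ k ∧ m ≤ l ∧
    (∀ i, (P i).Simple) ∧
    (∀ i, (P i).verts 0 ∈ D ∧ (P i).verts (Fin.last (P i).len) ∈ D) ∧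
    (∀ i j, i ≠ j → ∀ u, u ∈ Set.range (P i).verts → u ∈ Set.range (P j).verts →
      (P i).IsEndpoint u ∧ (P j).IsEndpoint u) ∧
    (∀ u ∈ G.dom, ∃ i, u ∈ Set.range (P i).verts) ∧
    (∀ t ∈ G.edgeTriples, ∃ i a, (P i).edges a = t)

/-- An edge of `G` crossing the boundary of a set `X` of nodes. -/
def Crossing {N E : Type} (G : Graph N E) (X : Set ℕ) (t : E × ℕ × ℕ) : Prop :=
  t ∈ G.edgeTriples ∧ ((t.2.1 ∈ X ∧ t.2.2 ∉ X) ∨ (t.2.1 ∉ X ∧ t.2.2 ∈ X))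

/-- `X` carries a finitely branching tree attached to `base` by a single edge. -/
def IsAttachedTree {N E : Type} (G : Graph N E) (base X : Set ℕ) : Prop :=
  X.Nonempty ∧ X ⊆ G.dom ∧
  (G.induce X).ConnectedG ∧ (G.induce X).AcyclicG ∧
  (∀ u ∈ X, G.FinBranching u) ∧
  (∃! t : E × ℕ × ℕ, Crossing G X t) ∧
  (∀ t, Crossing G X t → (t.2.1 ∈ X → t.2.2 ∈ base) ∧ (t.2.2 ∈ X → t.2.1 ∈ base))

/-- A possibly infinite graph is `c`-sparse: it consists of a finite connected
`c`-sparse graph with finitely many finitely branching trees attached. -/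
def Graph.SparseDecomp {N E : Type} (G : Graph N E) (c : ℕ) : Prop :=
  ∃ (core : Set ℕ) (comps : Set (Set ℕ)),
    core ⊆ G.dom ∧ core.Finite ∧
    (G.induce core).ConnectedG ∧
    (G.induce core).edgeTriples.Finite ∧
    (G.induce core).edgeTriples.ncard ≤ core.ncard + c ∧
    comps.Finite ∧ ⋃₀ comps = G.dom \ core ∧
    (∀ X ∈ comps, ∀ Y ∈ comps, X ≠ Y → Disjoint X Y) ∧
    (∀ X ∈ comps, IsAttachedTree G core X)



/-! ### Auxiliary development for Statement 18 -/

section SkeletonProof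

attribute [local instance] Classical.propDecidable

variable {N E : Type}

/-- arrival endpoint of a dart -/
def dArr (p : (E × ℕ × ℕ) × Bool) : ℕ := if p.2 then p.1.2.1 else p.1.2.2

/-- reverse dart -/
def dFlip (p : (E × ℕ × ℕ) × Bool) : (E × ℕ × ℕ) × Bool := (p.1, !p.2)

/-- departure endpoint of a dart -/
def dDep (p : (E × ℕ × ℕ) × Bool) : ℕ := dArr (dFlip p)

@[simp] lemma dFlip_dFlip (p : (E × ℕ × ℕ) × Bool) : dFlip (dFlip p) = p := by
  cases p with | mk t b => cases b <;> rfl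

@[simp] lemma dArr_dFlip (p : (E × ℕ × ℕ) × Bool) : dArr (dFlip p) = dDep p := rfl

@[simp] lemma dDep_dFlip (p : (E × ℕ × ℕ) × Bool) : dDep (dFlip p) = dArr p := by
  simp [dDep]

lemma dFlip_ne (p : (E × ℕ × ℕ) × Bool) : dFlip p ≠ p := by
  cases p with | mk t b => cases b <;> simp [dFlip]

lemma dFlip_inj {p q : (E × ℕ × ℕ) × Bool} (h : dFlip p = dFlip q) : p = q := by
  have := congrArg dFlip h; simpa using this

@[simp] lemma dFlip_fst (p : (E × ℕ × ℕ) × Bool) : (dFlip p).1 = p.1 := rfl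

lemma eq_or_flip {p q : (E × ℕ × ℕ) × Bool} (h : p.1 = q.1) : q = p ∨ q = dFlip p := by
  cases p with | mk t b => cases q with | mk s c =>
  simp only at h; subst h
  cases b <;> cases c <;> simp [dFlip]

/-- the half-edges / darts of a graph -/
def HE (G : Graph N E) : Set ((E × ℕ × ℕ) × Bool) := {p | p.1 ∈ G.edgeTriples}

/-- half-edges at a vertex -/
def HEat (G : Graph N E) (u : ℕ) : Set ((E × ℕ × ℕ) × Bool) :=
  {p | p ∈ HE G ∧ dArr p = u}

lemma HE_finite {G : Graph N E} (hefin : G.edgeTriples.Finite) : (HE G).Finite := by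
  have : HE G ⊆ G.edgeTriples ×ˢ (Set.univ : Set Bool) := by
    intro p hp; exact ⟨hp, Set.mem_univ _⟩
  exact (hefin.prod Set.finite_univ).subset this

lemma dFlip_mem_HE {G : Graph N E} {p} (hp : p ∈ HE G) : dFlip p ∈ HE G := hp

lemma dArr_mem_dom {G : Graph N E} {p} (hp : p ∈ HE G) : dArr p ∈ G.dom := by
  have h := G.edgeRel_dom p.1.1 p.1.2.1 p.1.2.2 hp
  cases hb : p.2 <;> simp [dArr, hb, h.1, h.2]

lemma dDep_mem_dom {G : Graph N E} {p} (hp : p ∈ HE G) : dDep p ∈ G.dom :=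
  dArr_mem_dom (dFlip_mem_HE hp)

lemma degree_eq_ncard_HEat (G : Graph N E) (u : ℕ) :
    G.degree u = (HEat G u).ncard := by
  unfold Graph.degree
  congr 1
  ext p
  constructor
  · rintro ⟨h1, h2⟩
    refine ⟨h1, ?_⟩
    cases hb : p.2 <;> simp [hb] at h2 <;> simp [dArr, hb, h2]
  · rintro ⟨h1, h2⟩
    refine ⟨h1, ?_⟩
    cases hb : p.2 <;> simp [dArr, hb] at h2 <;> simp [hb, h2]

/-- two-element set lemma -/
lemma two_elt {α : Type*} {S : Set α} (h2 : S.ncard = 2) {x y : α}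
    (hx : x ∈ S) (hy : y ∈ S) (hxy : x ≠ y) : ∀ z ∈ S, z = x ∨ z = y := by
  obtain ⟨a, b, hab, rfl⟩ := Set.ncard_eq_two.1 h2
  intro z hz
  simp only [Set.mem_insert_iff, Set.mem_singleton_iff] at hx hy hz
  rcases hx with rfl | rfl <;> rcases hy with rfl | rfl <;> tauto

/-- the other half-edge at the arrival vertex of `p` -/
noncomputable def other (G : Graph N E) (p : (E × ℕ × ℕ) × Bool) : (E × ℕ × ℕ) × Bool :=
  if h : ∃ q, q ∈ HEat G (dArr p) ∧ q ≠ p then h.choose else p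

section Other

variable {G : Graph N E} {p : (E × ℕ × ℕ) × Bool}

lemma other_mem (h2 : (HEat G (dArr p)).ncard = 2) (hp : p ∈ HE G) :
    other G p ∈ HEat G (dArr p) ∧ other G p ≠ p := by
  have hpm : p ∈ HEat G (dArr p) := ⟨hp, rfl⟩
  have hEx : ∃ q, q ∈ HEat G (dArr p) ∧ q ≠ p := by
    obtain ⟨a, b, hab, hset⟩ := Set.ncard_eq_two.1 h2
    by_cases hpa : p = a
    · refine ⟨b, ?_, ?_⟩
      · rw [hset]; simp
      · rw [← hpa] at hab; exact fun h => hab h.symm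
    · exact ⟨a, by rw [hset]; simp, fun h => hpa h.symm⟩
  rw [other, dif_pos hEx]
  exact hEx.choose_spec

lemma other_HE (h2 : (HEat G (dArr p)).ncard = 2) (hp : p ∈ HE G) :
    other G p ∈ HE G := (other_mem h2 hp).1.1

lemma dArr_other (h2 : (HEat G (dArr p)).ncard = 2) (hp : p ∈ HE G) :
    dArr (other G p) = dArr p := (other_mem h2 hp).1.2

lemma other_ne (h2 : (HEat G (dArr p)).ncard = 2) (hp : p ∈ HE G) :
    other G p ≠ p := (other_mem h2 hp).2

lemma other_uniq (h2 : (HEat G (dArr p)).ncard = 2) (hp : p ∈ HE G)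
    {q} (hq : q ∈ HEat G (dArr p)) (hne : q ≠ p) : q = other G p := by
  have h := two_elt h2 (⟨hp, rfl⟩ : p ∈ HEat G (dArr p)) (other_mem h2 hp).1
    (Ne.symm (other_ne h2 hp)) q hq
  tauto

lemma other_other (h2 : (HEat G (dArr p)).ncard = 2) (hp : p ∈ HE G) :
    other G (other G p) = p := by
  have h1 := other_mem h2 hp
  have harr : dArr (other G p) = dArr p := h1.1.2
  have h2' : (HEat G (dArr (other G p))).ncard = 2 := by rw [harr]; exact h2
  have := other_uniq h2' h1.1.1 (q := p) (by rw [harr]; exact ⟨hp, rfl⟩) (Ne.symm h1.2)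
  exact this.symm

end Other

/-- step of the walk: flip the other half-edge at the arrival vertex -/
noncomputable def dstep (G : Graph N E) (p : (E × ℕ × ℕ) × Bool) : (E × ℕ × ℕ) × Bool :=
  dFlip (other G p)

/-- the walk from a dart, frozen upon arrival in `D` -/
noncomputable def walkF (G : Graph N E) (D : Set ℕ) (p : (E × ℕ × ℕ) × Bool) :
    ℕ → (E × ℕ × ℕ) × Bool
  | 0 => p
  | i + 1 =>
    if dArr (walkF G D p i) ∈ D then walkF G D p i else dstep G (walkF G D p i)

@[simp] lemma walkF_zero (G : Graph N E) (D : Set ℕ) (p) : walkF G D p 0 = p := rfl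

lemma walkF_succ_of_mem {G : Graph N E} {D : Set ℕ} {p} {i : ℕ}
    (h : dArr (walkF G D p i) ∈ D) : walkF G D p (i + 1) = walkF G D p i := by
  rw [walkF, if_pos h]

lemma walkF_succ_of_not_mem {G : Graph N E} {D : Set ℕ} {p} {i : ℕ}
    (h : dArr (walkF G D p i) ∉ D) :
    walkF G D p (i + 1) = dstep G (walkF G D p i) := by
  rw [walkF, if_neg h]

lemma walkF_add (G : Graph N E) (D : Set ℕ) (p) (i j : ℕ) :
    walkF G D p (i + j) = walkF G D (walkF G D p i) j := by
  induction j with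
  | zero => rfl
  | succ j ih =>
    rw [show i + (j + 1) = (i + j) + 1 from rfl, walkF, ih, walkF]

/-- working context -/
structure WCtx (G : Graph N E) (D : Set ℕ) : Prop where
  efin : G.edgeTriples.Finite
  conn : G.ConnectedG
  Dsub : D ⊆ G.dom
  Dne : G.dom.Nonempty → D.Nonempty
  deg2 : ∀ u ∈ G.dom, u ∉ D → (HEat G u).ncard = 2

section Walk

variable {G : Graph N E} {D : Set ℕ}

lemma deg2_of (hx : WCtx G D) {p} (hp : p ∈ HE G) (hD : dArr p ∉ D) :
    (HEat G (dArr p)).ncard = 2 := hx.deg2 _ (dArr_mem_dom hp) hD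

lemma walkF_mem_HE (hx : WCtx G D) {p} (hp : p ∈ HE G) : ∀ i, walkF G D p i ∈ HE G := by
  intro i
  induction i with
  | zero => exact hp
  | succ i ih =>
    by_cases h : dArr (walkF G D p i) ∈ D
    · rw [walkF_succ_of_mem h]; exact ih
    · rw [walkF_succ_of_not_mem h]
      exact dFlip_mem_HE (other_HE (deg2_of hx ih h) ih)

lemma adj_symm {G : Graph N E} {u v} (h : G.Adj u v) : G.Adj v u := by
  obtain ⟨r, h⟩ := h; exact ⟨r, h.symm⟩

lemma no_cycle (hx : WCtx G D) {q0} (hq0 : q0 ∈ HE G) {d : ℕ} (hd : 0 < d)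
    (hper : walkF G D q0 d = q0) (hnD : ∀ i, dArr (walkF G D q0 i) ∉ D) : False := by
  set w := walkF G D q0 with hw
  have hHE : ∀ i, w i ∈ HE G := walkF_mem_HE hx hq0
  have hstep : ∀ i, w (i + 1) = dstep G (w i) := fun i => walkF_succ_of_not_mem (hnD i)
  rw [hw] at hper
  have hper' : ∀ i, w (d + i) = w i := by
    intro i; rw [hw, walkF_add, hper]
  have hpred : ∀ i, dDep (w i) = dArr (w (d + i - 1)) := by
    intro i
    have h1 : (d + i - 1) + 1 = d + i := by omega
    have h2 : w ((d + i - 1) + 1) = dstep G (w (d + i - 1)) := hstep _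
    rw [h1, hper' i] at h2
    have : dFlip (w i) = other G (w (d + i - 1)) := by
      rw [h2, dstep, dFlip_dFlip]
    rw [dDep, this]
    exact dArr_other (deg2_of hx (hHE _) (hnD _)) (hHE _)
  have hcl : ∀ u, (∃ i, dArr (w i) = u) → ∀ v, G.Adj u v → ∃ j, dArr (w j) = v := by
    rintro u ⟨i, hi⟩ v ⟨r, hr⟩
    have h2i : (HEat G (dArr (w i))).ncard = 2 := deg2_of hx (hHE i) (hnD i)
    have hoth : other G (w i) = dFlip (w (i + 1)) := by
      rw [hstep i, dstep, dFlip_dFlip]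
    have htwo := two_elt h2i (⟨hHE i, rfl⟩ : w i ∈ HEat G (dArr (w i)))
      (other_mem h2i (hHE i)).1 (Ne.symm (other_ne h2i (hHE i)))
    rcases hr with hr | hr
    · have ht : ((r, u, v), true) ∈ HEat G (dArr (w i)) := by
        refine ⟨?_, ?_⟩
        · show ((r, u, v) : E × ℕ × ℕ) ∈ G.edgeTriples; exact hr
        · have harr : dArr (((r, u, v), true) : (E × ℕ × ℕ) × Bool) = u := by simp [dArr]
          rw [harr, hi]
      rcases htwo _ ht with h | h
      · refine ⟨d + i - 1, ?_⟩
        have : dDep (w i) = v := by rw [← h]; rfl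
        rw [← hpred i, this]
      · refine ⟨i + 1, ?_⟩
        rw [hoth] at h
        have := congrArg dFlip h
        rw [dFlip_dFlip] at this
        rw [← this]; rfl
    · have ht : ((r, v, u), false) ∈ HEat G (dArr (w i)) := by
        refine ⟨?_, ?_⟩
        · show ((r, v, u) : E × ℕ × ℕ) ∈ G.edgeTriples; exact hr
        · have harr : dArr (((r, v, u), false) : (E × ℕ × ℕ) × Bool) = u := by simp [dArr]
          rw [harr, hi]
      rcases htwo _ ht with h | h
      · refine ⟨d + i - 1, ?_⟩
        have : dDep (w i) = v := by rw [← h]; rfl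
        rw [← hpred i, this]
      · refine ⟨i + 1, ?_⟩
        rw [hoth] at h
        have := congrArg dFlip h
        rw [dFlip_dFlip] at this
        rw [← this]; rfl
  have hdomne : G.dom.Nonempty := ⟨dArr (w 0), dArr_mem_dom (hHE 0)⟩
  obtain ⟨z, hz⟩ := hx.Dne hdomne
  have key : ∀ z', Relation.ReflTransGen G.Adj (dArr (w 0)) z' → ∃ j, dArr (w j) = z' := by
    intro z' hreach
    induction hreach with
    | refl => exact ⟨0, rfl⟩
    | tail h hadj ih => exact hcl _ ih _ hadj
  obtain ⟨j, hj⟩ := key z (hx.conn _ (dArr_mem_dom (hHE 0)) z (hx.Dsub hz))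
  exact hnD j (hj ▸ hz)

lemma exists_stop (hx : WCtx G D) {p} (hp : p ∈ HE G) :
    ∃ k, dArr (walkF G D p k) ∈ D := by
  by_contra h
  push_neg at h
  have hHE := walkF_mem_HE hx hp
  have hninj : ¬ Function.Injective (walkF G D p) := by
    intro hinj
    exact ((HE_finite hx.efin).subset (Set.range_subset_iff.2 hHE)).not_infinite
      (Set.infinite_range_of_injective hinj)
  rw [Function.Injective] at hninj
  push_neg at hninj
  obtain ⟨a, b, hab, hne⟩ := hninj
  rcases Nat.lt_or_ge a b with hlt | hge
  · refine no_cycle hx (q0 := walkF G D p a) (hHE a) (d := b - a) (by omega) ?_ ?_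
    · rw [← walkF_add, Nat.add_sub_cancel' (le_of_lt hlt)]; exact hab.symm
    · intro i; rw [← walkF_add]; exact h _
  · have hlt : b < a := by omega
    refine no_cycle hx (q0 := walkF G D p b) (hHE b) (d := a - b) (by omega) ?_ ?_
    · rw [← walkF_add, Nat.add_sub_cancel' (le_of_lt hlt)]; exact hab
    · intro i; rw [← walkF_add]; exact h _

/-- first arrival index in `D` -/
noncomputable def stopIdx (G : Graph N E) (D : Set ℕ) (p : (E × ℕ × ℕ) × Bool) : ℕ :=
  sInf {k | dArr (walkF G D p k) ∈ D}

lemma stop_arr_mem (hx : WCtx G D) {p} (hp : p ∈ HE G) :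
    dArr (walkF G D p (stopIdx G D p)) ∈ D := Nat.sInf_mem (exists_stop hx hp)

lemma stop_min {G : Graph N E} {D : Set ℕ} {p} {i : ℕ} (h : i < stopIdx G D p) :
    dArr (walkF G D p i) ∉ D := by
  have := Nat.notMem_of_lt_sInf (s := {k | dArr (walkF G D p k) ∈ D}) h
  exact this

lemma stop_le {G : Graph N E} {D : Set ℕ} {p} {i : ℕ}
    (h : dArr (walkF G D p i) ∈ D) : stopIdx G D p ≤ i :=
  Nat.sInf_le (show i ∈ {k | dArr (walkF G D p k) ∈ D} from h)

lemma walk_succ_lt {G : Graph N E} {D : Set ℕ} {p} {i : ℕ} (h : i < stopIdx G D p) :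
    walkF G D p (i + 1) = dstep G (walkF G D p i) :=
  walkF_succ_of_not_mem (stop_min h)

lemma stop_shift (hx : WCtx G D) {p} (hp : p ∈ HE G) {i : ℕ} (h : i ≤ stopIdx G D p) :
    stopIdx G D (walkF G D p i) = stopIdx G D p - i := by
  have hmem : dArr (walkF G D (walkF G D p i) (stopIdx G D p - i)) ∈ D := by
    rw [← walkF_add, Nat.add_sub_cancel' h]; exact stop_arr_mem hx hp
  apply le_antisymm
  · exact Nat.sInf_le hmem
  · refine le_csInf ⟨_, hmem⟩ ?_
    intro k hk
    rw [Set.mem_setOf_eq, ← walkF_add] at hk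
    have := stop_le hk
    omega

lemma walk_distinct (hx : WCtx G D) {p} (hp : p ∈ HE G) {i j : ℕ}
    (hij : i < j) (hj : j ≤ stopIdx G D p) : walkF G D p i ≠ walkF G D p j := by
  intro heq
  have hHE := walkF_mem_HE hx hp
  set q0 := walkF G D p i with hq0
  have hper : walkF G D q0 (j - i) = q0 := by
    rw [hq0, ← walkF_add, Nat.add_sub_cancel' (le_of_lt hij)]; exact heq.symm
  have hperiod : ∀ t, walkF G D q0 ((j - i) + t) = walkF G D q0 t := by
    intro t; rw [walkF_add, hper]
  have hreduce : ∀ t, ∃ t', t' < j - i ∧ walkF G D q0 t = walkF G D q0 t' := by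
    intro t
    induction t using Nat.strong_induction_on with
    | _ t ih =>
      by_cases h : t < j - i
      · exact ⟨t, h, rfl⟩
      · have h1 : t = (j - i) + (t - (j - i)) := by omega
        obtain ⟨t', ht', heq'⟩ := ih (t - (j - i)) (by omega)
        exact ⟨t', ht', by rw [h1, hperiod]; exact heq'⟩
  refine no_cycle hx (q0 := q0) (hHE i) (d := j - i) (by omega) hper ?_
  intro t
  obtain ⟨t', ht', heq'⟩ := hreduce t
  rw [heq', hq0, ← walkF_add]
  exact stop_min (by omega)

lemma walk_edge_inj_aux (hx : WCtx G D) {p} (hp : p ∈ HE G) :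
    ∀ n, ∀ i j : ℕ, i < j → j ≤ stopIdx G D p → j - i ≤ n →
      (walkF G D p i).1 ≠ (walkF G D p j).1 := by
  have hHE := walkF_mem_HE hx hp
  intro n
  induction n with
  | zero => intro i j hij hj hgap; omega
  | succ n ih =>
    intro i j hij hj hgap heq
    rcases eq_or_flip heq with h1 | h1
    · exact walk_distinct hx hp hij hj h1.symm
    · have hiD : dArr (walkF G D p i) ∉ D := stop_min (lt_of_lt_of_le hij hj)
      have h2i := deg2_of hx (hHE i) hiD
      by_cases hji : j = i + 1
      · have := walk_succ_lt (p := p) (i := i) (lt_of_lt_of_le hij hj)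
        rw [← hji] at this
        rw [this, dstep] at h1
        exact other_ne h2i (hHE i) (dFlip_inj h1)
      · have hj1 : i + 1 < j := by omega
        have hj1s : j - 1 < stopIdx G D p := by omega
        have hstepj : walkF G D p j = dFlip (other G (walkF G D p (j - 1))) := by
          have := walk_succ_lt (p := p) (i := j - 1) hj1s
          rw [show j - 1 + 1 = j by omega] at this
          rw [this, dstep]
        have hoth : other G (walkF G D p (j - 1)) = walkF G D p i :=
          dFlip_inj (by rw [← hstepj, ← h1])
        have h2j := deg2_of hx (hHE (j - 1)) (stop_min hj1s)
        have hwj1 : walkF G D p (j - 1) = other G (walkF G D p i) := by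
          have := congrArg (other G) hoth
          rwa [other_other h2j (hHE (j - 1))] at this
        have hstep2 : walkF G D p (i + 1) = dFlip (walkF G D p (j - 1)) := by
          rw [walk_succ_lt (lt_of_lt_of_le hij hj), dstep, hwj1]
        by_cases h : i + 1 = j - 1
        · rw [← h] at hstep2
          exact dFlip_ne _ hstep2.symm
        · have hlt : i + 1 < j - 1 := by omega
          refine ih (i + 1) (j - 1) hlt (by omega) (by omega) ?_
          rw [hstep2, dFlip_fst]

lemma walk_edge_inj (hx : WCtx G D) {p} (hp : p ∈ HE G) {i j : ℕ}
    (hij : i < j) (hj : j ≤ stopIdx G D p) :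
    (walkF G D p i).1 ≠ (walkF G D p j).1 :=
  walk_edge_inj_aux hx hp (j - i) i j hij hj le_rfl

lemma walk_vertex_inj (hx : WCtx G D) {p} (hp : p ∈ HE G) {i j : ℕ}
    (hij : i < j) (hj : j < stopIdx G D p) :
    dArr (walkF G D p i) ≠ dArr (walkF G D p j) := by
  intro heq
  have hHE := walkF_mem_HE hx hp
  have hiD : dArr (walkF G D p i) ∉ D := stop_min (by omega)
  have h2i := deg2_of hx (hHE i) hiD
  have hmem : walkF G D p j ∈ HEat G (dArr (walkF G D p i)) := ⟨hHE j, heq.symm⟩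
  have hne : walkF G D p j ≠ walkF G D p i :=
    Ne.symm (walk_distinct hx hp hij (le_of_lt hj))
  have hoth : walkF G D p j = other G (walkF G D p i) := other_uniq h2i (hHE i) hmem hne
  have hstep2 : walkF G D p (i + 1) = dFlip (walkF G D p j) := by
    rw [walk_succ_lt (by omega : i < stopIdx G D p), dstep, hoth]
  by_cases h : i + 1 = j
  · rw [h] at hstep2
    exact dFlip_ne _ hstep2.symm
  · have hlt : i + 1 < j := by omega
    refine walk_edge_inj hx hp hlt (le_of_lt hj) ?_
    rw [hstep2, dFlip_fst]

lemma dDep_walk_succ (hx : WCtx G D) {p} (hp : p ∈ HE G) {i : ℕ} (h : i < stopIdx G D p) :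
    dDep (walkF G D p (i + 1)) = dArr (walkF G D p i) := by
  have hHE := walkF_mem_HE hx hp
  rw [walk_succ_lt h, dstep, dDep_dFlip,
    dArr_other (deg2_of hx (hHE i) (stop_min h)) (hHE i)]

lemma rev_seg (hx : WCtx G D) {p} (hp : p ∈ HE G) {i : ℕ} (hi : i ≤ stopIdx G D p) :
    ∀ j, j ≤ i →
      walkF G D (dFlip (walkF G D p i)) j = dFlip (walkF G D p (i - j)) := by
  have hHE := walkF_mem_HE hx hp
  intro j
  induction j with
  | zero => intro _; simp
  | succ j ih =>
    intro hj
    have hj' : j ≤ i := by omega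
    have ihj := ih hj'
    have hij1 : i - j = (i - (j + 1)) + 1 := by omega
    have hlt : i - (j + 1) < stopIdx G D p := by omega
    have hdd : dDep (walkF G D p (i - j)) = dArr (walkF G D p (i - (j + 1))) := by
      rw [hij1]; exact dDep_walk_succ hx hp hlt
    have harr : dArr (walkF G D (dFlip (walkF G D p i)) j) ∉ D := by
      rw [ihj, dArr_dFlip, hdd]; exact stop_min hlt
    rw [walkF_succ_of_not_mem harr, ihj, dstep]
    have h2 := deg2_of hx (hHE (i - (j + 1))) (stop_min hlt)
    have hstep : walkF G D p (i - j) = dFlip (other G (walkF G D p (i - (j + 1)))) := by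
      rw [hij1, walk_succ_lt hlt, dstep]
    have hflip : dFlip (walkF G D p (i - j)) = other G (walkF G D p (i - (j + 1))) := by
      rw [hstep, dFlip_dFlip]
    rw [hflip, other_other h2 (hHE _)]

lemma rev_stop_ge (hx : WCtx G D) {p} (hp : p ∈ HE G) {i : ℕ} (hi : i ≤ stopIdx G D p) :
    i ≤ stopIdx G D (dFlip (walkF G D p i)) := by
  by_contra h
  push_neg at h
  have hmem := stop_arr_mem hx (dFlip_mem_HE (walkF_mem_HE hx hp i))
  set s' := stopIdx G D (dFlip (walkF G D p i)) with hs'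
  rw [rev_seg hx hp hi s' (by omega)] at hmem
  have h1 : i - s' = (i - (s' + 1)) + 1 := by omega
  have hlt : i - (s' + 1) < stopIdx G D p := by omega
  rw [dArr_dFlip, h1, dDep_walk_succ hx hp hlt] at hmem
  exact stop_min hlt hmem

lemma rev_stop_eq (hx : WCtx G D) {p} (hp : p ∈ HE G) (hst : dDep p ∈ D) {i : ℕ}
    (hi : i ≤ stopIdx G D p) : stopIdx G D (dFlip (walkF G D p i)) = i := by
  refine le_antisymm ?_ (rev_stop_ge hx hp hi)
  apply stop_le
  rw [rev_seg hx hp hi i le_rfl]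
  simpa using hst

/-- the start dart of the maximal path through a dart -/
noncomputable def sd (G : Graph N E) (D : Set ℕ) (q : (E × ℕ × ℕ) × Bool) :
    (E × ℕ × ℕ) × Bool :=
  dFlip (walkF G D (dFlip q) (stopIdx G D (dFlip q)))

lemma sd_HE (hx : WCtx G D) {q} (hq : q ∈ HE G) : sd G D q ∈ HE G :=
  dFlip_mem_HE (walkF_mem_HE hx (dFlip_mem_HE hq) _)

lemma sd_dDep (hx : WCtx G D) {q} (hq : q ∈ HE G) : dDep (sd G D q) ∈ D := by
  rw [sd, dDep_dFlip]
  exact stop_arr_mem hx (dFlip_mem_HE hq)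

lemma sd_walk (hx : WCtx G D) {q} (hq : q ∈ HE G) :
    walkF G D (sd G D q) (stopIdx G D (dFlip q)) = q := by
  rw [sd, rev_seg hx (dFlip_mem_HE hq) le_rfl _ le_rfl]
  simp

lemma sd_stop_ge (hx : WCtx G D) {q} (hq : q ∈ HE G) :
    stopIdx G D (dFlip q) ≤ stopIdx G D (sd G D q) :=
  rev_stop_ge hx (dFlip_mem_HE hq) le_rfl

lemma sd_eq (hx : WCtx G D) {p0} (hp0 : p0 ∈ HE G) (hst : dDep p0 ∈ D) {i : ℕ}
    (hi : i ≤ stopIdx G D p0) : sd G D (walkF G D p0 i) = p0 := by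
  rw [sd, rev_stop_eq hx hp0 hst hi, rev_seg hx hp0 hi i le_rfl]
  simp

/-- the reversed start dart -/
noncomputable def phi (G : Graph N E) (D : Set ℕ) (p0 : (E × ℕ × ℕ) × Bool) :
    (E × ℕ × ℕ) × Bool :=
  dFlip (walkF G D p0 (stopIdx G D p0))

lemma phi_HE (hx : WCtx G D) {p0} (hp0 : p0 ∈ HE G) : phi G D p0 ∈ HE G :=
  dFlip_mem_HE (walkF_mem_HE hx hp0 _)

lemma phi_dDep (hx : WCtx G D) {p0} (hp0 : p0 ∈ HE G) : dDep (phi G D p0) ∈ D := by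
  rw [phi, dDep_dFlip]
  exact stop_arr_mem hx hp0

lemma phi_stop (hx : WCtx G D) {p0} (hp0 : p0 ∈ HE G) (hst : dDep p0 ∈ D) :
    stopIdx G D (phi G D p0) = stopIdx G D p0 :=
  rev_stop_eq hx hp0 hst le_rfl

lemma phi_walk (hx : WCtx G D) {p0} (hp0 : p0 ∈ HE G) {j : ℕ}
    (hj : j ≤ stopIdx G D p0) :
    walkF G D (phi G D p0) j = dFlip (walkF G D p0 (stopIdx G D p0 - j)) :=
  rev_seg hx hp0 le_rfl j hj

lemma phi_phi (hx : WCtx G D) {p0} (hp0 : p0 ∈ HE G) (hst : dDep p0 ∈ D) :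
    phi G D (phi G D p0) = p0 := by
  rw [show phi G D (phi G D p0)
      = dFlip (walkF G D (phi G D p0) (stopIdx G D (phi G D p0))) from rfl,
    phi_stop hx hp0 hst, phi_walk hx hp0 le_rfl]
  simp

lemma phi_ne (hx : WCtx G D) {p0} (hp0 : p0 ∈ HE G) (hst : dDep p0 ∈ D) :
    phi G D p0 ≠ p0 := by
  intro heq
  by_cases hs : stopIdx G D p0 = 0
  · rw [phi, hs, walkF_zero] at heq
    exact dFlip_ne _ heq
  · have h1 : p0.1 = (walkF G D p0 (stopIdx G D p0)).1 := by
      have := congrArg Prod.fst heq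
      simpa [phi, dFlip] using this.symm
    exact walk_edge_inj hx hp0 (Nat.pos_of_ne_zero hs) le_rfl h1

/-- vertex sequence of the path from a start dart -/
noncomputable def pvert (G : Graph N E) (D : Set ℕ) (p0 : (E × ℕ × ℕ) × Bool) (i : ℕ) : ℕ :=
  if i = 0 then dDep p0 else dArr (walkF G D p0 (i - 1))

@[simp] lemma pvert_zero (G : Graph N E) (D : Set ℕ) (p0) : pvert G D p0 0 = dDep p0 := by
  simp [pvert]

lemma pvert_succ (G : Graph N E) (D : Set ℕ) (p0) (i : ℕ) :
    pvert G D p0 (i + 1) = dArr (walkF G D p0 i) := by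
  simp [pvert]

lemma pvert_dep (hx : WCtx G D) {p0} (hp0 : p0 ∈ HE G) {i : ℕ} (hi : i ≤ stopIdx G D p0) :
    pvert G D p0 i = dDep (walkF G D p0 i) := by
  cases i with
  | zero => simp
  | succ i =>
    rw [pvert_succ, dDep_walk_succ hx hp0 (by omega)]

/-- the simple path generated by a start dart -/
noncomputable def mkPath (hx : WCtx G D) {p0} (hp0 : p0 ∈ HE G) (hst : dDep p0 ∈ D) :
    GPath G where
  len := stopIdx G D p0 + 1
  verts := fun i => pvert G D p0 i.val
  edges := fun a => (walkF G D p0 a.val).1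
  verts_mem := by
    intro i
    by_cases h : i.val = 0
    · simp [pvert, h]; exact dDep_mem_dom hp0
    · simp [pvert, h]; exact dArr_mem_dom (walkF_mem_HE hx hp0 _)
  edges_mem := fun a => walkF_mem_HE hx hp0 a.val
  conn := by
    intro a
    have hale : a.val ≤ stopIdx G D p0 := by omega
    have hc : pvert G D p0 a.castSucc.val = dDep (walkF G D p0 a.val) := by
      show pvert G D p0 a.val = _
      exact pvert_dep hx hp0 hale
    have hs : pvert G D p0 a.succ.val = dArr (walkF G D p0 a.val) := by
      show pvert G D p0 (a.val + 1) = _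
      exact pvert_succ G D p0 a.val
    show (walkF G D p0 a.val).1.2 = (pvert G D p0 a.castSucc.val, pvert G D p0 a.succ.val) ∨
      (walkF G D p0 a.val).1.2 = (pvert G D p0 a.succ.val, pvert G D p0 a.castSucc.val)
    rw [hc, hs]
    cases hb : (walkF G D p0 a.val).2
    · left
      simp [dArr, dDep, dFlip, hb]
    · right
      simp [dArr, dDep, dFlip, hb]

lemma mkPath_len (hx : WCtx G D) {p0} (hp0 : p0 ∈ HE G) (hst : dDep p0 ∈ D) :
    (mkPath hx hp0 hst).len = stopIdx G D p0 + 1 := rfl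

lemma mkPath_verts (hx : WCtx G D) {p0} (hp0 : p0 ∈ HE G) (hst : dDep p0 ∈ D) (i) :
    (mkPath hx hp0 hst).verts i = pvert G D p0 i.val := rfl

/-- vertex set of the path from `p0` -/
def vertsSet (G : Graph N E) (D : Set ℕ) (p0 : (E × ℕ × ℕ) × Bool) : Set ℕ :=
  {u | u = dDep p0 ∨ ∃ r ≤ stopIdx G D p0, u = dArr (walkF G D p0 r)}

/-- edge set of the path from `p0` -/
def edgesSet (G : Graph N E) (D : Set ℕ) (p0 : (E × ℕ × ℕ) × Bool) : Set (E × ℕ × ℕ) :=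
  {t | ∃ r ≤ stopIdx G D p0, t = (walkF G D p0 r).1}

lemma range_verts (hx : WCtx G D) {p0} (hp0 : p0 ∈ HE G) (hst : dDep p0 ∈ D) :
    Set.range (mkPath hx hp0 hst).verts = vertsSet G D p0 := by
  ext u
  constructor
  · rintro ⟨i, rfl⟩
    show pvert G D p0 i.val ∈ _
    by_cases h : i.val = 0
    · left; simp [pvert, h]
    · right
      refine ⟨i.val - 1, ?_, ?_⟩
      · have := i.isLt
        simp only [mkPath_len] at this
        omega
      · simp [pvert, h]
  · rintro (rfl | ⟨r, hr, rfl⟩)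
    · refine ⟨⟨0, by omega⟩, ?_⟩
      rw [mkPath_verts hx hp0 hst]
      simp
    · refine ⟨⟨r + 1, by simp only [mkPath_len]; omega⟩, ?_⟩
      show pvert G D p0 (r + 1) = _
      rw [pvert_succ]

lemma mkPath_edges_mem (hx : WCtx G D) {p0} (hp0 : p0 ∈ HE G) (hst : dDep p0 ∈ D)
    {t} (ht : t ∈ edgesSet G D p0) : ∃ a, (mkPath hx hp0 hst).edges a = t := by
  obtain ⟨r, hr, rfl⟩ := ht
  exact ⟨⟨r, by simp only [mkPath_len]; omega⟩, rfl⟩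

lemma endpoint_iff (hx : WCtx G D) {p0} (hp0 : p0 ∈ HE G) (hst : dDep p0 ∈ D) {u} :
    (mkPath hx hp0 hst).IsEndpoint u ↔
      (u = dDep p0 ∨ u = dArr (walkF G D p0 (stopIdx G D p0))) := by
  unfold GPath.IsEndpoint
  rw [mkPath_verts hx hp0 hst, mkPath_verts hx hp0 hst]
  have h0 : pvert G D p0 ((0 : Fin ((mkPath hx hp0 hst).len + 1))).val = dDep p0 := by simp
  have hl : pvert G D p0 (Fin.last ((mkPath hx hp0 hst).len)).val
      = dArr (walkF G D p0 (stopIdx G D p0)) := by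
    show pvert G D p0 (stopIdx G D p0 + 1) = _
    rw [pvert_succ]
  rw [h0, hl]
  constructor
  · rintro (h | h)
    · exact Or.inl h.symm
    · exact Or.inr h.symm
  · rintro (h | h)
    · exact Or.inl h.symm
    · exact Or.inr h.symm

lemma verts_mem_D_cases (hx : WCtx G D) {p0} (hp0 : p0 ∈ HE G) (hst : dDep p0 ∈ D) {u}
    (hu : u ∈ vertsSet G D p0) (huD : u ∈ D) :
    u = dDep p0 ∨ u = dArr (walkF G D p0 (stopIdx G D p0)) := by
  rcases hu with h | ⟨r, hr, rfl⟩
  · exact Or.inl h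
  · rcases Nat.lt_or_ge r (stopIdx G D p0) with hlt | hge
    · exact absurd huD (stop_min hlt)
    · right
      have hre : r = stopIdx G D p0 := le_antisymm hr hge
      rw [hre]

lemma mkPath_simple (hx : WCtx G D) {p0} (hp0 : p0 ∈ HE G) (hst : dDep p0 ∈ D) :
    (mkPath hx hp0 hst).Simple := by
  constructor
  · intro a b hab
    by_contra hne
    have hvne : a.val ≠ b.val := fun h => hne (Fin.ext h)
    have hale : a.val ≤ stopIdx G D p0 := by have := a.isLt; simp only [mkPath_len] at this; omega
    have hble : b.val ≤ stopIdx G D p0 := by have := b.isLt; simp only [mkPath_len] at this; omega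
    rcases Nat.lt_or_ge a.val b.val with h | h
    · exact walk_edge_inj hx hp0 h hble hab
    · exact walk_edge_inj hx hp0 (by omega) hale (hab.symm)
  · intro i j hij
    have hij' : pvert G D p0 i.val = pvert G D p0 j.val := hij
    have hi2 : i.val < stopIdx G D p0 + 2 := i.isLt
    have hj2 : j.val < stopIdx G D p0 + 2 := j.isLt
    have hmid : ∀ r : ℕ, 0 < r → r < stopIdx G D p0 + 1 → pvert G D p0 r ∉ D := by
      intro r h0 hr1
      have hre : pvert G D p0 r = dArr (walkF G D p0 (r - 1)) := by
        simp [pvert, Nat.pos_iff_ne_zero.mp h0]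
      rw [hre]
      exact stop_min (by omega)
    have hD0 : pvert G D p0 0 ∈ D := by simpa using hst
    have hDl : pvert G D p0 (stopIdx G D p0 + 1) ∈ D := by
      rw [pvert_succ]; exact stop_arr_mem hx hp0
    have hlast : (Fin.last (mkPath hx hp0 hst).len).val = stopIdx G D p0 + 1 := rfl
    show i = j ∨ (i = 0 ∧ j = Fin.last _) ∨ (j = 0 ∧ i = Fin.last _)
    by_cases hi0 : i.val = 0 <;> by_cases hj0 : j.val = 0
    · left; exact Fin.ext (by omega)
    · by_cases hjl : j.val = stopIdx G D p0 + 1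
      · right; left
        exact ⟨Fin.ext (by simpa using hi0), Fin.ext (by rw [hlast]; exact hjl)⟩
      · exfalso
        refine hmid j.val (by omega) (by omega) ?_
        rw [← hij', hi0]; exact hD0
    · by_cases hil : i.val = stopIdx G D p0 + 1
      · right; right
        exact ⟨Fin.ext (by simpa using hj0), Fin.ext (by rw [hlast]; exact hil)⟩
      · exfalso
        refine hmid i.val (by omega) (by omega) ?_
        rw [hij', hj0]; exact hD0
    · by_cases hil : i.val = stopIdx G D p0 + 1 <;> by_cases hjl : j.val = stopIdx G D p0 + 1
      · left; exact Fin.ext (by omega)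
      · exfalso
        refine hmid j.val (by omega) (by omega) ?_
        rw [← hij', hil]; exact hDl
      · exfalso
        refine hmid i.val (by omega) (by omega) ?_
        rw [hij', hjl]; exact hDl
      · have hieq : pvert G D p0 i.val = dArr (walkF G D p0 (i.val - 1)) := by simp [pvert, hi0]
        have hjeq : pvert G D p0 j.val = dArr (walkF G D p0 (j.val - 1)) := by simp [pvert, hj0]
        have hij2 : dArr (walkF G D p0 (i.val - 1)) = dArr (walkF G D p0 (j.val - 1)) := by
          rw [← hieq, ← hjeq]; exact hij'
        rcases lt_trichotomy i.val j.val with h | h | h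
        · exact absurd hij2 (walk_vertex_inj hx hp0 (by omega) (by omega))
        · left; exact Fin.ext h
        · exact absurd hij2.symm (walk_vertex_inj hx hp0 (by omega) (by omega))

lemma vertsSet_phi_subset (hx : WCtx G D) {p0} (hp0 : p0 ∈ HE G) (hst : dDep p0 ∈ D) :
    vertsSet G D (phi G D p0) ⊆ vertsSet G D p0 := by
  intro u hu
  set s := stopIdx G D p0 with hs
  rcases hu with h | ⟨r, hr, rfl⟩
  · right
    refine ⟨s, le_rfl, ?_⟩
    rw [h, phi, dDep_dFlip]
  · rw [phi_stop hx hp0 hst] at hr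
    rw [phi_walk hx hp0 hr, dArr_dFlip]
    by_cases h0 : s - r = 0
    · left; rw [h0, walkF_zero]
    · obtain ⟨k, hk⟩ : ∃ k, s - r = k + 1 := ⟨s - r - 1, by omega⟩
      right
      refine ⟨k, by omega, ?_⟩
      rw [hk, dDep_walk_succ hx hp0 (by omega)]

lemma vertsSet_phi (hx : WCtx G D) {p0} (hp0 : p0 ∈ HE G) (hst : dDep p0 ∈ D) :
    vertsSet G D (phi G D p0) = vertsSet G D p0 := by
  refine Set.Subset.antisymm (vertsSet_phi_subset hx hp0 hst) ?_
  have h := vertsSet_phi_subset hx (phi_HE hx hp0) (phi_dDep hx hp0)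
  rwa [phi_phi hx hp0 hst] at h

lemma edgesSet_phi_subset (hx : WCtx G D) {p0} (hp0 : p0 ∈ HE G) (hst : dDep p0 ∈ D) :
    edgesSet G D (phi G D p0) ⊆ edgesSet G D p0 := by
  rintro t ⟨r, hr, rfl⟩
  rw [phi_stop hx hp0 hst] at hr
  refine ⟨stopIdx G D p0 - r, by omega, ?_⟩
  rw [phi_walk hx hp0 hr, dFlip_fst]

lemma edgesSet_phi (hx : WCtx G D) {p0} (hp0 : p0 ∈ HE G) (hst : dDep p0 ∈ D) :
    edgesSet G D (phi G D p0) = edgesSet G D p0 := by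
  refine Set.Subset.antisymm (edgesSet_phi_subset hx hp0 hst) ?_
  have h := edgesSet_phi_subset hx (phi_HE hx hp0) (phi_dDep hx hp0)
  rwa [phi_phi hx hp0 hst] at h

/-- two distinct, non-reversed paths can only meet at `D`-vertices -/
lemma meet_mem_D (hx : WCtx G D) {p0 p0'} (h0 : p0 ∈ HE G) (hst0 : dDep p0 ∈ D)
    (h1 : p0' ∈ HE G) (hst1 : dDep p0' ∈ D) (hne : p0' ≠ p0)
    (hnphi : p0' ≠ phi G D p0) {u}
    (hu : u ∈ vertsSet G D p0) (hu' : u ∈ vertsSet G D p0') : u ∈ D := by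
  by_contra huD
  obtain ⟨r, hr, rfl⟩ : ∃ r < stopIdx G D p0, u = dArr (walkF G D p0 r) := by
    rcases hu with h | ⟨r, hr, rfl⟩
    · exact absurd (h ▸ hst0) huD
    · rcases Nat.lt_or_ge r (stopIdx G D p0) with hlt | hge
      · exact ⟨r, hlt, rfl⟩
      · have : r = stopIdx G D p0 := le_antisymm hr hge
        rw [this] at huD ⊢
        exact absurd (stop_arr_mem hx h0) huD
  obtain ⟨r', hr', heq⟩ : ∃ r' < stopIdx G D p0',
      dArr (walkF G D p0 r) = dArr (walkF G D p0' r') := by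
    rcases hu' with h | ⟨r', hr', heq⟩
    · exact absurd (h ▸ hst1) huD
    · rcases Nat.lt_or_ge r' (stopIdx G D p0') with hlt | hge
      · exact ⟨r', hlt, heq⟩
      · have hre : r' = stopIdx G D p0' := le_antisymm hr' hge
        rw [hre] at heq
        rw [heq] at huD
        exact absurd (stop_arr_mem hx h1) huD
  have hHE := walkF_mem_HE hx h0
  have hHE' := walkF_mem_HE hx h1
  have h2 := deg2_of hx (hHE r) (stop_min hr)
  have hmem' : walkF G D p0' r' ∈ HEat G (dArr (walkF G D p0 r)) := ⟨hHE' r', heq.symm⟩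
  have htwo := two_elt h2 (⟨hHE r, rfl⟩ : walkF G D p0 r ∈ HEat G (dArr (walkF G D p0 r)))
    (other_mem h2 (hHE r)).1 (Ne.symm (other_ne h2 (hHE r)))
  rcases htwo _ hmem' with hcase | hcase
  · have e1 : sd G D (walkF G D p0' r') = p0' := sd_eq hx h1 hst1 (le_of_lt hr')
    have e0 : sd G D (walkF G D p0 r) = p0 := sd_eq hx h0 hst0 (le_of_lt hr)
    rw [hcase] at e1
    exact hne (e1.symm.trans e0)
  · have hoth : other G (walkF G D p0 r) = dFlip (walkF G D p0 (r + 1)) := by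
      rw [walk_succ_lt hr, dstep, dFlip_dFlip]
    rw [hoth] at hcase
    have e1 : sd G D (walkF G D p0' r') = p0' := sd_eq hx h1 hst1 (le_of_lt hr')
    have e2 : sd G D (dFlip (walkF G D p0 (r + 1))) = phi G D p0 := by
      rw [sd, dFlip_dFlip, stop_shift hx h0 (by omega), ← walkF_add,
        Nat.add_sub_cancel' (by omega : r + 1 ≤ stopIdx G D p0)]
      rfl
    rw [hcase, e2] at e1
    exact hnphi e1.symm

end Walk

lemma count_at {G : Graph N E} (hefin : G.edgeTriples.Finite) {D' : Set ℕ} (hD' : D'.Finite) :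
    {p | p ∈ HE G ∧ dArr p ∈ D'}.ncard = ∑ u ∈ hD'.toFinset, G.degree u := by
  have hfin : {p | p ∈ HE G ∧ dArr p ∈ D'}.Finite :=
    (HE_finite hefin).subset (fun p hp => hp.1)
  rw [Set.ncard_eq_toFinset_card _ hfin]
  rw [Finset.card_eq_sum_card_fiberwise (f := dArr) (t := hD'.toFinset)
    (fun x hx => by
      rw [Finset.mem_coe, Set.Finite.mem_toFinset] at hx
      rw [Finset.mem_coe, Set.Finite.mem_toFinset]
      exact hx.2)]
  refine Finset.sum_congr rfl ?_
  intro u hu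
  rw [Set.Finite.mem_toFinset] at hu
  have hfinat : (HEat G u).Finite := (HE_finite hefin).subset (fun p hp => hp.1)
  rw [degree_eq_ncard_HEat, Set.ncard_eq_toFinset_card _ hfinat]
  congr 1
  ext p
  constructor
  · intro hp
    rw [Finset.mem_filter, Set.Finite.mem_toFinset] at hp
    rw [Set.Finite.mem_toFinset]
    exact ⟨hp.1.1, hp.2⟩
  · intro hp
    rw [Set.Finite.mem_toFinset] at hp
    rw [Finset.mem_filter, Set.Finite.mem_toFinset]
    exact ⟨⟨hp.1, hp.2 ▸ hu⟩, hp.2⟩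

lemma ncard_HE {G : Graph N E} (hefin : G.edgeTriples.Finite) :
    (HE G).ncard = 2 * G.edgeTriples.ncard := by
  have h : HE G = (fun t => (t, true)) '' G.edgeTriples ∪
      (fun t => (t, false)) '' G.edgeTriples := by
    ext p
    constructor
    · intro hp
      cases hb : p.2
      · right; exact ⟨p.1, hp, by cases p; simp_all⟩
      · left; exact ⟨p.1, hp, by cases p; simp_all⟩
    · rintro (⟨t, ht, rfl⟩ | ⟨t, ht, rfl⟩) <;> exact ht
  have hinj1 : Function.Injective (fun t : E × ℕ × ℕ => (t, true)) := by
    intro a b hab; simpa using hab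
  have hinj2 : Function.Injective (fun t : E × ℕ × ℕ => (t, false)) := by
    intro a b hab; simpa using hab
  have hdisj : Disjoint ((fun t : E × ℕ × ℕ => (t, true)) '' G.edgeTriples)
      ((fun t : E × ℕ × ℕ => (t, false)) '' G.edgeTriples) := by
    rw [Set.disjoint_left]
    rintro p ⟨t, _, rfl⟩ ⟨t', _, h⟩
    simp at h
  rw [h, Set.ncard_union_eq hdisj (hefin.image _) (hefin.image _),
    Set.ncard_image_of_injective _ hinj1, Set.ncard_image_of_injective _ hinj2]
  ring

lemma sum_deg_eq {G : Graph N E} (hefin : G.edgeTriples.Finite) (hdomfin : G.dom.Finite) :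
    ∑ u ∈ hdomfin.toFinset, G.degree u = 2 * G.edgeTriples.ncard := by
  rw [← ncard_HE hefin, ← count_at hefin hdomfin]
  congr 1
  ext p
  exact ⟨fun hp => hp.1, fun hp => ⟨hp, dArr_mem_dom hp⟩⟩

lemma ncard_starts {G : Graph N E} {D : Set ℕ} (hefin : G.edgeTriples.Finite)
    (hDfin : D.Finite) :
    {p | p ∈ HE G ∧ dDep p ∈ D}.ncard = ∑ u ∈ hDfin.toFinset, G.degree u := by
  rw [← count_at hefin hDfin]
  have himg : dFlip '' {p | p ∈ HE G ∧ dDep p ∈ D} = {p | p ∈ HE G ∧ dArr p ∈ D} := by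
    ext q
    constructor
    · rintro ⟨p, ⟨hpHE, hpD⟩, rfl⟩
      exact ⟨dFlip_mem_HE hpHE, by rw [dArr_dFlip]; exact hpD⟩
    · rintro ⟨hqHE, hqD⟩
      exact ⟨dFlip q, ⟨dFlip_mem_HE hqHE, by rw [dDep_dFlip]; exact hqD⟩, dFlip_dFlip q⟩
  rw [← himg, Set.ncard_image_of_injective _ (fun a b hab => dFlip_inj hab)]

lemma assembly {G : Graph N E} {D : Set ℕ} (hx : WCtx G D) (hDfin : D.Finite)
    {k l : ℕ} (hk : D.ncard ≤ k)
    (hvert : ∀ u ∈ G.dom, (HEat G u).Nonempty)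
    (hl : {p | p ∈ HE G ∧ dDep p ∈ D}.ncard ≤ 2 * l) :
    IsSkeleton G k l := by
  classical
  set S := {p | p ∈ HE G ∧ dDep p ∈ D} with hSdef
  have hSfin : S.Finite := (HE_finite hx.efin).subset (fun p hp => hp.1)
  have hphiS : ∀ p ∈ S, phi G D p ∈ S := fun p hp => ⟨phi_HE hx hp.1, phi_dDep hx hp.1⟩
  have hphiinv : ∀ p ∈ S, phi G D (phi G D p) = p := fun p hp => phi_phi hx hp.1 hp.2
  have hphine : ∀ p ∈ S, phi G D p ≠ p := fun p hp => phi_ne hx hp.1 hp.2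
  set F := hSfin.toFinset with hFdef
  set e := F.equivFin with hedef
  set enc : ((E × ℕ × ℕ) × Bool) → ℕ :=
    fun p => if h : p ∈ F then (e ⟨p, h⟩ : ℕ) else 0 with hencdef
  have hencinj : ∀ p ∈ S, ∀ q ∈ S, enc p = enc q → p = q := by
    intro p hp q hq h
    have hpF : p ∈ F := hSfin.mem_toFinset.2 hp
    have hqF : q ∈ F := hSfin.mem_toFinset.2 hq
    rw [hencdef] at h
    simp only [dif_pos hpF, dif_pos hqF] at h
    have h2 := e.injective (Fin.ext h)
    exact Subtype.ext_iff.1 h2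
  set T := {p | p ∈ S ∧ enc p < enc (phi G D p)} with hTdef
  have hTsub : T ⊆ S := fun p hp => hp.1
  have hTfin : T.Finite := hSfin.subset hTsub
  have hcover : ∀ p ∈ S, p ∈ T ∨ phi G D p ∈ T := by
    intro p hp
    rcases lt_trichotomy (enc p) (enc (phi G D p)) with h | h | h
    · exact Or.inl ⟨hp, h⟩
    · exact absurd (hencinj p hp (phi G D p) (hphiS p hp) h).symm (hphine p hp)
    · refine Or.inr ⟨hphiS p hp, ?_⟩
      rw [hphiinv p hp]
      exact h
  have hsplit : S = T ∪ phi G D '' T := by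
    ext p
    constructor
    · intro hp
      rcases hcover p hp with h | h
      · exact Or.inl h
      · exact Or.inr ⟨phi G D p, h, hphiinv p hp⟩
    · rintro (h | ⟨q, hq, rfl⟩)
      · exact hTsub h
      · exact hphiS q (hTsub hq)
  have hdisj : Disjoint T (phi G D '' T) := by
    rw [Set.disjoint_left]
    rintro p hpT ⟨q, hqT, rfl⟩
    have h1 : enc (phi G D q) < enc (phi G D (phi G D q)) := hpT.2
    rw [hphiinv q (hTsub hqT)] at h1
    exact absurd hqT.2 (by omega)
  have hInjOn : Set.InjOn (phi G D) T := by
    intro p hp q hq h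
    have := congrArg (phi G D) h
    rw [hphiinv p (hTsub hp), hphiinv q (hTsub hq)] at this
    exact this
  have hcard2 : S.ncard = 2 * T.ncard := by
    rw [hsplit, Set.ncard_union_eq hdisj hTfin (hTfin.image _),
      Set.ncard_image_of_injOn hInjOn]
    ring
  set FT := hTfin.toFinset with hFTdef
  set m := FT.card with hmdef
  have hmle : m ≤ l := by
    have h1 : T.ncard = m := by rw [Set.ncard_eq_toFinset_card _ hTfin]
    omega
  set eT := FT.equivFin with heTdef
  have helem : ∀ i : Fin m, ((eT.symm i : FT) : (E × ℕ × ℕ) × Bool) ∈ T :=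
    fun i => hTfin.mem_toFinset.1 (eT.symm i).2
  have helemS : ∀ i : Fin m, ((eT.symm i : FT) : (E × ℕ × ℕ) × Bool) ∈ S :=
    fun i => hTsub (helem i)
  refine ⟨D, m, fun i => mkPath hx (helemS i).1 (helemS i).2,
    hx.Dsub, hDfin, hk, hmle, ?_, ?_, ?_, ?_, ?_⟩
  · intro i
    exact mkPath_simple hx (helemS i).1 (helemS i).2
  · intro i
    constructor
    · rw [mkPath_verts hx (helemS i).1 (helemS i).2 0]
      simpa using (helemS i).2
    · rw [mkPath_verts hx (helemS i).1 (helemS i).2 (Fin.last _)]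
      show pvert G D _ (stopIdx G D _ + 1) ∈ D
      rw [pvert_succ]
      exact stop_arr_mem hx (helemS i).1
  · intro i j hij u hui huj
    set pi := ((eT.symm i : FT) : (E × ℕ × ℕ) × Bool) with hpidef
    set pj := ((eT.symm j : FT) : (E × ℕ × ℕ) × Bool) with hpjdef
    rw [range_verts hx (helemS i).1 (helemS i).2] at hui
    rw [range_verts hx (helemS j).1 (helemS j).2] at huj
    have hne : pj ≠ pi := by
      intro h
      apply hij
      have h1 : (eT.symm j : FT) = (eT.symm i : FT) := Subtype.ext h
      have := congrArg eT h1
      rw [Equiv.apply_symm_apply, Equiv.apply_symm_apply] at this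
      exact this.symm
    have hnphij : pj ≠ phi G D pi := by
      intro h
      have : pj ∈ phi G D '' T := ⟨pi, helem i, h.symm⟩
      exact (Set.disjoint_left.1 hdisj (helem j)) this
    have hnphii : pi ≠ phi G D pj := by
      intro h
      have : pi ∈ phi G D '' T := ⟨pj, helem j, h.symm⟩
      exact (Set.disjoint_left.1 hdisj (helem i)) this
    have huD : u ∈ D :=
      meet_mem_D hx (helemS i).1 (helemS i).2 (helemS j).1 (helemS j).2 hne hnphij hui huj
    constructor
    · exact (endpoint_iff hx (helemS i).1 (helemS i).2).2
        (verts_mem_D_cases hx (helemS i).1 (helemS i).2 hui huD)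
    · exact (endpoint_iff hx (helemS j).1 (helemS j).2).2
        (verts_mem_D_cases hx (helemS j).1 (helemS j).2 huj huD)
  · intro u hu
    obtain ⟨q, hq⟩ := hvert u hu
    have hqHE : q ∈ HE G := hq.1
    set p0 := sd G D q with hp0def
    have hp0S : p0 ∈ S := ⟨sd_HE hx hqHE, sd_dDep hx hqHE⟩
    have hqon : u ∈ vertsSet G D p0 := by
      right
      refine ⟨stopIdx G D (dFlip q), sd_stop_ge hx hqHE, ?_⟩
      rw [sd_walk hx hqHE]
      exact hq.2.symm
    rcases hcover p0 hp0S with hT | hT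
    · have hmem : p0 ∈ FT := hTfin.mem_toFinset.2 hT
      refine ⟨eT ⟨p0, hmem⟩, ?_⟩
      rw [range_verts hx (helemS _).1 (helemS _).2]
      have hval : ((eT.symm (eT ⟨p0, hmem⟩) : FT) : (E × ℕ × ℕ) × Bool) = p0 := by
        rw [Equiv.symm_apply_apply]
      rw [hval]
      exact hqon
    · have hmem : phi G D p0 ∈ FT := hTfin.mem_toFinset.2 hT
      refine ⟨eT ⟨phi G D p0, hmem⟩, ?_⟩
      rw [range_verts hx (helemS _).1 (helemS _).2]
      have hval : ((eT.symm (eT ⟨phi G D p0, hmem⟩) : FT) : (E × ℕ × ℕ) × Bool)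
          = phi G D p0 := by
        rw [Equiv.symm_apply_apply]
      rw [hval, vertsSet_phi hx hp0S.1 hp0S.2]
      exact hqon
  · intro t ht
    have hqHE : ((t, true) : (E × ℕ × ℕ) × Bool) ∈ HE G := ht
    set p0 := sd G D (t, true) with hp0def
    have hp0S : p0 ∈ S := ⟨sd_HE hx hqHE, sd_dDep hx hqHE⟩
    have hton : t ∈ edgesSet G D p0 := by
      refine ⟨stopIdx G D (dFlip (t, true)), sd_stop_ge hx hqHE, ?_⟩
      rw [sd_walk hx hqHE]
    rcases hcover p0 hp0S with hT | hT
    · have hmem : p0 ∈ FT := hTfin.mem_toFinset.2 hT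
      refine ⟨eT ⟨p0, hmem⟩, ?_⟩
      have hval : ((eT.symm (eT ⟨p0, hmem⟩) : FT) : (E × ℕ × ℕ) × Bool) = p0 := by
        rw [Equiv.symm_apply_apply]
      apply mkPath_edges_mem hx (helemS _).1 (helemS _).2
      rw [hval]
      exact hton
    · have hmem : phi G D p0 ∈ FT := hTfin.mem_toFinset.2 hT
      refine ⟨eT ⟨phi G D p0, hmem⟩, ?_⟩
      have hval : ((eT.symm (eT ⟨phi G D p0, hmem⟩) : FT) : (E × ℕ × ℕ) × Bool)
          = phi G D p0 := by
        rw [Equiv.symm_apply_apply]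
      apply mkPath_edges_mem hx (helemS _).1 (helemS _).2
      rw [hval, edgesSet_phi hx hp0S.1 hp0S.2]
      exact hton

end SkeletonProof

/-- For `c ≥ 1`, a finite connected `c`-sparse multigraph all of
whose nodes have degree at least 2 is a `(2c, 3c)`-skeleton. -/
theorem sparse_min_degree_two_skeleton {N E : Type} (c : ℕ) (hc : 1 ≤ c)
    (G : Graph N E)
    (hdomfin : G.dom.Finite) (hefin : G.edgeTriples.Finite)
    (hconn : G.ConnectedG)
    (hsparse : G.edgeTriples.ncard ≤ G.dom.ncard + c)
    (hdeg : ∀ u ∈ G.dom, 2 ≤ G.degree u) :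
    IsSkeleton G (2 * c) (3 * c) := by
  classical
  by_cases hdom : G.dom = ∅
  · refine ⟨∅, 0, Fin.elim0, Set.empty_subset _, Set.finite_empty, by simp,
      by omega, fun i => i.elim0, fun i => i.elim0, fun i => i.elim0, ?_, ?_⟩
    · intro u hu
      rw [hdom] at hu
      exact absurd hu (Set.notMem_empty u)
    · intro t ht
      have h := G.edgeRel_dom t.1 t.2.1 t.2.2 ht
      rw [hdom] at h
      exact absurd h.1 (Set.notMem_empty _)
  · have hdomne : G.dom.Nonempty := Set.nonempty_iff_ne_empty.2 hdom
    have hvert : ∀ u ∈ G.dom, (HEat G u).Nonempty := by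
      intro u hu
      have h2 : 2 ≤ (HEat G u).ncard := by
        rw [← degree_eq_ncard_HEat]; exact hdeg u hu
      exact Set.nonempty_of_ncard_ne_zero (by omega)
    have hsum : ∑ u ∈ hdomfin.toFinset, G.degree u = 2 * G.edgeTriples.ncard :=
      sum_deg_eq hefin hdomfin
    have hdomcard : hdomfin.toFinset.card = G.dom.ncard :=
      (Set.ncard_eq_toFinset_card _ hdomfin).symm
    have hsumsplit : ∀ (s : Finset ℕ), (∀ u ∈ s, u ∈ G.dom) →
        ∑ u ∈ s, G.degree u = (∑ u ∈ s, (G.degree u - 2)) + 2 * s.card := by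
      intro s hs
      have h1 : ∑ u ∈ s, G.degree u = ∑ u ∈ s, ((G.degree u - 2) + 2) :=
        Finset.sum_congr rfl (fun u hu => by have := hdeg u (hs u hu); omega)
      rw [h1, Finset.sum_add_distrib, Finset.sum_const, smul_eq_mul]
      ring
    set deg3 := {u | u ∈ G.dom ∧ 3 ≤ G.degree u} with hdeg3def
    have hdeg3fin : deg3.Finite := hdomfin.subset (fun u hu => hu.1)
    by_cases hD3 : deg3.Nonempty
    · have hxctx : WCtx G deg3 := by
        refine ⟨hefin, hconn, fun u hu => hu.1, fun _ => hD3, ?_⟩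
        intro u hu hnot
        have h2 := hdeg u hu
        have h3 : ¬ 3 ≤ G.degree u := fun h => hnot ⟨hu, h⟩
        rw [← degree_eq_ncard_HEat]
        omega
      have hsub : hdeg3fin.toFinset ⊆ hdomfin.toFinset := by
        intro u hu
        rw [Set.Finite.mem_toFinset] at hu
        rw [Set.Finite.mem_toFinset]
        exact hu.1
      have hsd : ∑ u ∈ hdomfin.toFinset, G.degree u
          = (∑ u ∈ hdomfin.toFinset, (G.degree u - 2)) + 2 * hdomfin.toFinset.card :=
        hsumsplit _ (fun u hu => hdomfin.mem_toFinset.1 hu)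
      have hexc : ∑ u ∈ hdomfin.toFinset, (G.degree u - 2) ≤ 2 * c := by omega
      have hexc3 : ∑ u ∈ hdeg3fin.toFinset, (G.degree u - 2) ≤ 2 * c :=
        le_trans (Finset.sum_le_sum_of_subset hsub) hexc
      have hcard3 : hdeg3fin.toFinset.card ≤ ∑ u ∈ hdeg3fin.toFinset, (G.degree u - 2) := by
        rw [Finset.card_eq_sum_ones]
        refine Finset.sum_le_sum ?_
        intro u hu
        rw [Set.Finite.mem_toFinset] at hu
        have := hu.2
        omega
      have hDcard : deg3.ncard ≤ 2 * c := by
        rw [Set.ncard_eq_toFinset_card _ hdeg3fin]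
        omega
      have hsd3 : ∑ u ∈ hdeg3fin.toFinset, G.degree u
          = (∑ u ∈ hdeg3fin.toFinset, (G.degree u - 2)) + 2 * hdeg3fin.toFinset.card :=
        hsumsplit _ (fun u hu => (hdeg3fin.mem_toFinset.1 hu).1)
      have hS : {p | p ∈ HE G ∧ dDep p ∈ deg3}.ncard ≤ 2 * (3 * c) := by
        rw [ncard_starts hefin hdeg3fin]
        omega
      exact assembly hxctx hdeg3fin hDcard hvert hS
    · obtain ⟨u0, hu0⟩ := hdomne
      have hdeg2all : ∀ u ∈ G.dom, G.degree u = 2 := by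
        intro u hu
        have h2 := hdeg u hu
        have h3 : ¬ 3 ≤ G.degree u := fun h => hD3 ⟨u, hu, h⟩
        omega
      have hxctx : WCtx G {u0} := by
        refine ⟨hefin, hconn, ?_, fun _ => ⟨u0, rfl⟩, ?_⟩
        · intro v hv
          rw [Set.mem_singleton_iff] at hv
          rw [hv]
          exact hu0
        · intro u hu _
          rw [← degree_eq_ncard_HEat]
          exact hdeg2all u hu
      have hk : ({u0} : Set ℕ).ncard ≤ 2 * c := by
        rw [Set.ncard_singleton]
        omega
      have hS : {p | p ∈ HE G ∧ dDep p ∈ ({u0} : Set ℕ)}.ncard ≤ 2 * (3 * c) := by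
        rw [ncard_starts hefin (Set.finite_singleton u0)]
        have ht : (Set.finite_singleton u0).toFinset = {u0} := by
          ext v
          simp
        rw [ht, Finset.sum_singleton, hdeg2all u0 hu0]
        omega
      exact assembly hxctx (Set.finite_singleton u0) hk hvert hS

end GDB
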